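/- arXiv:1802.00251 — 7 statements merged into one kernel-verified Lean document; each statement's English description precedes it below -/
import Mathlib

section
/- Let G be a {P5, K3}-free graph. Then each connected component of G is either bipartite or isomorphic to an independent expansion of C5 (i.e., obtained from C5 by replacing each vertex by a nonempty independent set and joining two such sets completely exactly when the corresponding vertices of C5 are adjacent). -/
open SimpleGraph Finset

/-- `G` contains an induced copy of `H`. -/
def HasInducedCopy {V W : Type*} (G : SimpleGraph V) (H : SimpleGraph W) : Prop :=
  ∃ f : W ↪ V, ∀ a b, G.Adj (f a) (f b) ↔ H.Adj a b

/-- The cycle on `ZMod n` (for `n ≥ 3`). -/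
def cyc (n : ℕ) : SimpleGraph (ZMod n) where
  Adj i j := i ≠ j ∧ (i = j + 1 ∨ j = i + 1)
  symm := ⟨fun i j h => ⟨h.1.symm, h.2.symm⟩⟩
  loopless := ⟨fun i h => h.1 rfl⟩

/-- Kite: diamond (K4 minus an edge) plus a pendant vertex adjacent to a degree-3 vertex. -/
def kite : SimpleGraph (Fin 5) :=
  SimpleGraph.fromEdgeSet {s(0,1), s(0,2), s(1,2), s(1,3), s(2,3), s(1,4)}

/-- Bull: triangle with two pendant edges at distinct vertices. -/
def bull : SimpleGraph (Fin 5) :=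
  SimpleGraph.fromEdgeSet {s(0,1), s(0,2), s(1,2), s(0,3), s(1,4)}

/-- Independent expansion of the cycle `C_n`. -/
def indExp (n : ℕ) (m : ZMod n → ℕ) : SimpleGraph (Σ i : ZMod n, Fin (m i)) where
  Adj x y := x.1 ≠ y.1 ∧ (x.1 = y.1 + 1 ∨ y.1 = x.1 + 1)
  symm := ⟨fun x y h => ⟨h.1.symm, h.2.symm⟩⟩
  loopless := ⟨fun x h => h.1 rfl⟩

/-- Complete expansion of the cycle `C_n`. -/
def compExp (n : ℕ) (m : ZMod n → ℕ) : SimpleGraph (Σ i : ZMod n, Fin (m i)) where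
  Adj x y := (x.1 = y.1 ∧ x ≠ y) ∨ (x.1 ≠ y.1 ∧ (x.1 = y.1 + 1 ∨ y.1 = x.1 + 1))
  symm := by
    constructor
    rintro x y (⟨h, hne⟩ | ⟨h, h2⟩)
    · exact Or.inl ⟨h.symm, hne.symm⟩
    · exact Or.inr ⟨h.symm, h2.symm⟩
  loopless := by constructor; rintro x (⟨_, hne⟩ | ⟨h, _⟩); exacts [hne rfl, h rfl]

/-- Distance from a vertex to a set of vertices. -/
noncomputable def distToSet {V : Type*} (G : SimpleGraph V) (S : Set V) (x : V) : ℕ :=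
  sInf ((fun y => G.dist x y) '' S)

namespace SimpleGraph.Walk
variable {V : Type*} {G : SimpleGraph V}

def wtake : {u v : V} → (w : G.Walk u v) → (n : ℕ) → G.Walk u (w.getVert n)
  | _, _, .nil, _ => .nil
  | _, _, .cons _ _, 0 => .nil
  | _, _, .cons h p, (n+1) => .cons h (wtake p n)

def wdrop : {u v : V} → (w : G.Walk u v) → (n : ℕ) → G.Walk (w.getVert n) v
  | _, _, .nil, _ => .nil
  | _, _, .cons h p, 0 => .cons h p
  | _, _, .cons _ p, (n+1) => wdrop p n

lemma length_wtake : ∀ {u v : V} (w : G.Walk u v) (n : ℕ), n ≤ w.length → (wtake w n).length = n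
  | _, _, .nil, n, h => by simp at h; simp [wtake, h]
  | _, _, .cons _ _, 0, _ => rfl
  | _, _, .cons h p, (n+1), hn => by
      simp only [wtake, length_cons] at *
      exact congrArg (· + 1) (length_wtake p n (by omega))

lemma length_wdrop : ∀ {u v : V} (w : G.Walk u v) (n : ℕ), (wdrop w n).length = w.length - n
  | _, _, .nil, n => by simp [wdrop]
  | _, _, .cons _ _, 0 => rfl
  | _, _, .cons h p, (n+1) => by
      simp only [wdrop, length_cons]
      exact (length_wdrop p n).trans (by omega)

lemma getVert_wdrop : ∀ {u v : V} (w : G.Walk u v) (n k : ℕ),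
    (wdrop w n).getVert k = w.getVert (n + k)
  | _, _, .nil, n, k => by simp [wdrop, getVert]
  | _, _, .cons _ _, 0, k => by simp [wdrop]; rfl
  | _, _, .cons h p, (n+1), k => by
      simp only [wdrop, getVert_cons_succ]
      rw [getVert_wdrop p n k, show n+1+k = (n+k)+1 by omega, Walk.getVert_cons_succ]

end SimpleGraph.Walk

section FreeLemmas
variable {V : Type*} {G : SimpleGraph V}

lemma tri_free (hK3 : ¬ HasInducedCopy G (⊤ : SimpleGraph (Fin 3)))
    {x y z : V} (hxy : G.Adj x y) (hxz : G.Adj x z) (hyz : G.Adj y z) : False := by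
  apply hK3
  have d1 : x ≠ y := hxy.ne
  have d2 : x ≠ z := hxz.ne
  have d3 : y ≠ z := hyz.ne
  refine ⟨⟨![x,y,z], ?_⟩, ?_⟩
  · intro a b hab
    fin_cases a <;> fin_cases b <;> simp_all
  · intro a b
    show G.Adj (![x,y,z] a) (![x,y,z] b) ↔ _
    fin_cases a <;> fin_cases b <;>
      simp_all [hxy.symm, hxz.symm, hyz.symm, G.irrefl]

lemma p5_free (hP5 : ¬ HasInducedCopy G (pathGraph 5))
    {a b c d e : V} (h1 : G.Adj a b) (h2 : G.Adj b c) (h3 : G.Adj c d) (h4 : G.Adj d e)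
    (n1 : ¬G.Adj a c) (n2 : ¬G.Adj a d) (n3 : ¬G.Adj a e)
    (n4 : ¬G.Adj b d) (n5 : ¬G.Adj b e) (n6 : ¬G.Adj c e)
    (d1 : a ≠ c) (d2 : a ≠ d) (d3 : a ≠ e) (d4 : b ≠ d) (d5 : b ≠ e) (d6 : c ≠ e) : False := by
  apply hP5
  have e1 : a ≠ b := h1.ne
  have e2 : b ≠ c := h2.ne
  have e3 : c ≠ d := h3.ne
  have e4 : d ≠ e := h4.ne
  have m1 : ¬G.Adj c a := fun h => n1 h.symm
  have m2 : ¬G.Adj d a := fun h => n2 h.symm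
  have m3 : ¬G.Adj e a := fun h => n3 h.symm
  have m4 : ¬G.Adj d b := fun h => n4 h.symm
  have m5 : ¬G.Adj e b := fun h => n5 h.symm
  have m6 : ¬G.Adj e c := fun h => n6 h.symm
  refine ⟨⟨![a,b,c,d,e], ?_⟩, ?_⟩
  · intro i j hij
    fin_cases i <;> fin_cases j <;> simp_all
  · intro i j
    show G.Adj (![a,b,c,d,e] i) (![a,b,c,d,e] j) ↔ _
    fin_cases i <;> fin_cases j <;>
      simp_all [pathGraph_adj, h1.symm, h2.symm, h3.symm, h4.symm, G.irrefl] <;> decide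

end FreeLemmas

section C5
variable {V : Type*} {G : SimpleGraph V}

lemma exists_C5 (hP5 : ¬ HasInducedCopy G (pathGraph 5))
    (hK3 : ¬ HasInducedCopy G (⊤ : SimpleGraph (Fin 3)))
    {u0 : V} {w0 : G.Walk u0 u0} (hodd : Odd w0.length) :
    ∃ v : ZMod 5 → V, (∀ i, G.Reachable u0 (v i)) ∧ Function.Injective v ∧
      (∀ i j : ZMod 5, G.Adj (v i) (v j) ↔ (i = j + 1 ∨ j = i + 1)) := by
  classical
  set OW : Set ℕ := {n | Odd n ∧ ∃ (x : V) (p : G.Walk x x), G.Reachable u0 x ∧ p.length = n}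
    with hOW
  have hmem : sInf OW ∈ OW := Nat.sInf_mem ⟨w0.length, hodd, u0, w0, .refl _, rfl⟩
  set L := sInf OW with hLdef
  obtain ⟨hLodd, u, w, hur, hwl⟩ := hmem
  have hmin : ∀ n ∈ OW, L ≤ n := fun n hn => Nat.sInf_le hn
  have hL1 : L ≠ 1 := by
    intro h
    have h2 : G.Adj (w.getVert 0) (w.getVert 1) := w.adj_getVert_succ (by omega)
    rw [w.getVert_zero, show (1:ℕ) = w.length by omega, w.getVert_length] at h2
    exact G.loopless.irrefl u h2
  have hL3 : 3 ≤ L := by obtain ⟨k, hk⟩ := hLodd; omega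
  have hreach : ∀ n : ℕ, G.Reachable u0 (w.getVert n) := fun n => hur.trans ⟨w.wtake n⟩
  -- distinctness of the first L vertices
  have hdist : ∀ a b : ℕ, a < b → b < L → w.getVert a ≠ w.getVert b := by
    intro a b hab hbL heq
    have e1 : (w.wdrop a).getVert (b-a) = w.getVert a := by
      rw [w.getVert_wdrop, show a + (b-a) = b by omega]; exact heq.symm
    have hw1 : (((w.wdrop a).wtake (b-a)).copy rfl e1).length = b - a := by
      rw [Walk.length_copy, Walk.length_wtake _ _ (by rw [Walk.length_wdrop]; omega)]
    have hw2 : (((w.wdrop b).copy heq.symm rfl).append (w.wtake a)).length = (L - b) + a := by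
      rw [Walk.length_append, Walk.length_copy, Walk.length_wdrop,
        Walk.length_wtake _ _ (by omega), hwl]
    rcases Nat.even_or_odd (b - a) with he | ho
    · have ho2 : Odd ((L - b) + a) := by
        obtain ⟨k, hk⟩ := hLodd; obtain ⟨m, hm⟩ := he; exact ⟨k - m, by omega⟩
      have := hmin _ ⟨ho2, _, _, hreach a, hw2⟩; omega
    · have := hmin _ ⟨ho, _, _, hreach a, hw1⟩; omega
  -- chords
  have hchord : ∀ a b : ℕ, a < b → b < L → G.Adj (w.getVert a) (w.getVert b) →
      b = a + 1 ∨ (a = 0 ∧ b = L - 1) := by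
    intro a b hab hbL hadj
    by_contra hcon
    push_neg at hcon
    obtain ⟨hne1, hne2⟩ := hcon
    have hba2 : 2 ≤ b - a := by omega
    have hba : b - a ≤ L - 2 := by omega
    have e1 : (w.wdrop a).getVert (b-a) = w.getVert b := by
      rw [w.getVert_wdrop, show a + (b-a) = b by omega]
    have hw1 : ((((w.wdrop a).wtake (b-a)).copy rfl e1).concat hadj.symm).length
        = (b - a) + 1 := by
      rw [Walk.length_concat, Walk.length_copy,
        Walk.length_wtake _ _ (by rw [Walk.length_wdrop]; omega)]
    have hw2 : (((w.wdrop b).append (w.wtake a)).concat hadj).length = (L - b) + a + 1 := by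
      rw [Walk.length_concat, Walk.length_append, Walk.length_wdrop,
        Walk.length_wtake _ _ (by omega), hwl]
    rcases Nat.even_or_odd ((b - a) + 1) with he | ho
    · have ho2 : Odd ((L - b) + a + 1) := by
        obtain ⟨k, hk⟩ := hLodd; obtain ⟨m, hm⟩ := he; exact ⟨k + 1 - m, by omega⟩
      have := hmin _ ⟨ho2, _, _, hreach b, hw2⟩; omega
    · have := hmin _ ⟨ho, _, _, hreach a, hw1⟩; omega
  -- consecutive adjacency
  have hadjsucc : ∀ n : ℕ, n < L → G.Adj (w.getVert n) (w.getVert (n+1)) := by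
    intro n hn; exact w.adj_getVert_succ (by omega)
  have hwrap : w.getVert L = w.getVert 0 := by rw [← hwl, w.getVert_length, w.getVert_zero]
  -- L ≠ 3
  have hL3' : L ≠ 3 := by
    intro h
    have h01 : G.Adj (w.getVert 0) (w.getVert 1) := hadjsucc 0 (by omega)
    have h12 : G.Adj (w.getVert 1) (w.getVert 2) := hadjsucc 1 (by omega)
    have h20 : G.Adj (w.getVert 2) (w.getVert 0) := by
      have := hadjsucc 2 (by omega); rwa [show (2:ℕ)+1 = L by omega, hwrap] at this
    exact tri_free hK3 h01 (h20.symm) h12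
  -- L < 7
  have hL7 : L < 7 := by
    by_contra h
    push_neg at h
    have key : ∀ a b : ℕ, a < b → b ≤ 4 → b ≠ a + 1 → ¬ G.Adj (w.getVert a) (w.getVert b) := by
      intro a b hab hb4 hne hadj
      rcases hchord a b hab (by omega) hadj with h' | h' <;> omega
    exact p5_free hP5 (hadjsucc 0 (by omega)) (hadjsucc 1 (by omega)) (hadjsucc 2 (by omega))
      (hadjsucc 3 (by omega))
      (key 0 2 (by omega) (by omega) (by omega)) (key 0 3 (by omega) (by omega) (by omega))
      (key 0 4 (by omega) (by omega) (by omega)) (key 1 3 (by omega) (by omega) (by omega))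
      (key 1 4 (by omega) (by omega) (by omega)) (key 2 4 (by omega) (by omega) (by omega))
      (hdist 0 2 (by omega) (by omega)) (hdist 0 3 (by omega) (by omega))
      (hdist 0 4 (by omega) (by omega)) (hdist 1 3 (by omega) (by omega))
      (hdist 1 4 (by omega) (by omega)) (hdist 2 4 (by omega) (by omega))
  have hL5 : L = 5 := by obtain ⟨k, hk⟩ := hLodd; omega
  -- build v
  have z1 : ∀ i j : ZMod 5, j.val = i.val + 1 → j = i + 1 := by decide
  have z1' : ∀ i j : ZMod 5, i.val = 0 → j.val = 4 → i = j + 1 := by decide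
  have z2 : ∀ i : ZMod 5, (i+1).val = (i.val+1) % 5 := by decide
  have z3 : ∀ i j : ZMod 5, i.val = j.val → i = j := by decide
  have hv5 : ∀ i : ZMod 5, i.val < 5 := fun i => i.val_lt
  refine ⟨fun i => w.getVert i.val, fun i => hreach _, ?_, ?_⟩
  · intro i j hij
    by_contra hne
    have h' : i.val ≠ j.val := fun h => hne (z3 _ _ h)
    rcases Nat.lt_or_ge i.val j.val with h | h
    · exact hdist i.val j.val h (by rw [hL5]; exact hv5 j) hij
    · exact hdist j.val i.val (by omega) (by rw [hL5]; exact hv5 i) hij.symm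
  · have hadjsucc' : ∀ i : ZMod 5, G.Adj (w.getVert i.val) (w.getVert ((i+1).val)) := by
      intro i
      have h2 := z2 i
      rcases Nat.lt_or_ge i.val 4 with h | h
      · rw [h2, Nat.mod_eq_of_lt (by omega)]; exact hadjsucc i.val (by omega)
      · have h4 : i.val = 4 := by have := hv5 i; omega
        have h0 : (i+1).val = 0 := by rw [h2, h4]
        rw [h0, ← hwrap, hL5, h4]
        exact hadjsucc 4 (by omega)
    intro i j
    constructor
    · intro hadj
      have h' : i.val ≠ j.val := by
        intro h; rw [z3 _ _ h] at hadj; exact G.loopless.irrefl _ hadj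
      rcases Nat.lt_or_ge i.val j.val with h | h
      · rcases hchord i.val j.val h (by rw [hL5]; exact hv5 j) hadj with h'' | h''
        · exact Or.inr (z1 i j h'')
        · rw [hL5] at h''; exact Or.inl (z1' i j h''.1 h''.2)
      · rcases hchord j.val i.val (by omega) (by rw [hL5]; exact hv5 i) hadj.symm with h'' | h''
        · exact Or.inl (z1 j i h'')
        · rw [hL5] at h''; exact Or.inr (z1' j i h''.1 h''.2)
    · rintro (h | h)
      · rw [h]; exact (hadjsucc' j).symm
      · rw [h]; exact hadjsucc' i

end C5

section PartA
variable {V : Type*} {G : SimpleGraph V}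

lemma odd_walk_of_not_colorable (c : G.ConnectedComponent)
    (h : ¬ (G.induce c.supp).Colorable 2) :
    ∃ (x : V) (p : G.Walk x x), x ∈ c.supp ∧ Odd p.length := by
  classical
  by_contra hcon
  push_neg at hcon
  obtain ⟨v0, hv0⟩ := c.exists_rep
  apply h
  refine ⟨Coloring.mk (fun x => ⟨G.dist v0 x.1 % 2, Nat.mod_lt _ (by omega)⟩) ?_⟩
  intro x y hadj heq
  have hx : G.Reachable v0 x.1 := by
    have h2 := (ConnectedComponent.mem_supp_iff _ _).mp x.2
    exact (ConnectedComponent.exact (h2.trans hv0.symm)).symm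
  have hy : G.Reachable v0 y.1 := by
    have h2 := (ConnectedComponent.mem_supp_iff _ _).mp y.2
    exact (ConnectedComponent.exact (h2.trans hv0.symm)).symm
  obtain ⟨p, hp⟩ := hx.exists_walk_length_eq_dist
  obtain ⟨q, hq⟩ := hy.exists_walk_length_eq_dist
  have hadj' : G.Adj x.1 y.1 := hadj
  have hv0c : v0 ∈ c.supp := (ConnectedComponent.mem_supp_iff _ _).mpr hv0
  have hkey := hcon v0 (p.append (Walk.cons hadj' q.reverse)) hv0c
  rw [Nat.odd_iff] at hkey
  simp only [Walk.length_append, Walk.length_reverse, Walk.length_cons] at hkey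
  have hmod : G.dist v0 x.1 % 2 = G.dist v0 y.1 % 2 := congrArg Fin.val heq
  rw [hp, hq] at hkey
  omega
end PartA

/-- Each connected component of a {P5, K3}-free graph is bipartite or an
independent expansion of C5. -/
theorem stmt_0 {V : Type*} [Fintype V] (G : SimpleGraph V)
    (hP5 : ¬ HasInducedCopy G (pathGraph 5))
    (hK3 : ¬ HasInducedCopy G (⊤ : SimpleGraph (Fin 3))) :
    ∀ c : G.ConnectedComponent,
      (G.induce c.supp).Colorable 2 ∨
      ∃ m : ZMod 5 → ℕ, (∀ i, 0 < m i) ∧ Nonempty (G.induce c.supp ≃g indExp 5 m) := by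

  intro c
  by_cases hcol : (G.induce c.supp).Colorable 2
  · exact Or.inl hcol
  right
  classical
  obtain ⟨u0, w0, hu0, hodd⟩ := odd_walk_of_not_colorable c hcol
  obtain ⟨v, hvr, hvinj, hva⟩ := exists_C5 hP5 hK3 hodd
  have tri : ∀ {x y z : V}, G.Adj x y → G.Adj x z → G.Adj y z → False :=
    fun h1 h2 h3 => tri_free hK3 h1 h2 h3
  have hsuppv : ∀ i, v i ∈ c.supp := by
    intro i
    rw [ConnectedComponent.mem_supp_iff,
      ← (ConnectedComponent.mem_supp_iff _ _).mp hu0]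
    exact (ConnectedComponent.sound (hvr i)).symm
  have cadj : ∀ i k : ZMod 5, (i = k + 1 ∨ k = i + 1) → G.Adj (v i) (v k) :=
    fun i k h => (hva i k).mpr h
  have ncyc : ∀ i k : ZMod 5, ¬(i = k + 1 ∨ k = i + 1) → ¬G.Adj (v i) (v k) :=
    fun i k h hadj => h ((hva i k).mp hadj)
  have vne : ∀ i k : ZMod 5, i ≠ k → v i ≠ v k := fun i k h he => h (hvinj he)
  set W : ZMod 5 → V → Prop := fun i x => G.Adj x (v (i-1)) ∧ G.Adj x (v (i+1)) with hWdef
  have hWv : ∀ i, W i (v i) := by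
    intro i
    exact ⟨cadj i (i-1) (Or.inl ((by decide : ∀ i : ZMod 5, i = (i-1)+1) i)),
      cadj i (i+1) (Or.inr rfl)⟩
  have hWnadj : ∀ i x, W i x →
      ¬G.Adj x (v i) ∧ ¬G.Adj x (v (i+2)) ∧ ¬G.Adj x (v (i+3)) := by
    intro i x hx
    refine ⟨fun h => tri h hx.1 (cadj i (i-1)
        (Or.inl ((by decide : ∀ i : ZMod 5, i = (i-1)+1) i))), ?_, ?_⟩
    · exact fun h => tri h hx.2 (cadj (i+1) (i+2)
        (Or.inr ((by decide : ∀ i : ZMod 5, i+2 = (i+1)+1) i))).symm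
    · exact fun h => tri h hx.1 (cadj (i-1) (i+3)
        (Or.inl ((by decide : ∀ i : ZMod 5, i-1 = (i+3)+1) i))).symm
  -- every neighbor of the cycle is in some class
  have hclass : ∀ x j, G.Adj x (v j) → ∃ i, W i x := by
    intro x j hj
    by_cases hcons : ∃ k, G.Adj x (v k) ∧ G.Adj x (v (k+1))
    · obtain ⟨k, h1, h2⟩ := hcons
      exact absurd (cadj k (k+1) (Or.inr rfl)) (fun h => tri h1 h2 h)
    by_cases hdist2 : ∃ k, G.Adj x (v k) ∧ G.Adj x (v (k+2))
    · obtain ⟨k, h1, h2⟩ := hdist2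
      refine ⟨k+1, ?_, ?_⟩
      · rwa [(by decide : ∀ k : ZMod 5, (k+1)-1 = k) k]
      · rwa [(by decide : ∀ k : ZMod 5, (k+1)+1 = k+2) k]
    push_neg at hcons hdist2
    exfalso
    have hj1 : ¬G.Adj x (v (j+1)) := hcons j hj
    have hj2 : ¬G.Adj x (v (j+2)) := hdist2 j hj
    have hj3 : ¬G.Adj x (v (j+3)) := fun h => (hdist2 (j+3) h)
      (by rwa [(by decide : ∀ j : ZMod 5, (j+3)+2 = j) j])
    refine p5_free hP5 hj (cadj j (j+1) (Or.inr rfl))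
      (cadj (j+1) (j+2) (Or.inr (by ring))) (cadj (j+2) (j+3) (Or.inr (by ring)))
      hj1 hj2 hj3
      (ncyc j (j+2) ((by decide : ∀ j : ZMod 5, ¬(j = (j+2)+1 ∨ j+2 = j+1)) j))
      (ncyc j (j+3) ((by decide : ∀ j : ZMod 5, ¬(j = (j+3)+1 ∨ j+3 = j+1)) j))
      (ncyc (j+1) (j+3) ((by decide : ∀ j : ZMod 5, ¬(j+1 = (j+3)+1 ∨ j+3 = (j+1)+1)) j))
      ?_ ?_ ?_ (vne j (j+2) ((by decide : ∀ j : ZMod 5, j ≠ j+2) j))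
      (vne j (j+3) ((by decide : ∀ j : ZMod 5, j ≠ j+3) j))
      (vne (j+1) (j+3) ((by decide : ∀ j : ZMod 5, j+1 ≠ j+3) j))
    · intro h; rw [h] at hj2; exact hj2 (cadj (j+1) (j+2) (Or.inr (by ring)))
    · intro h; rw [h] at hj3; exact hj3 (cadj (j+2) (j+3) (Or.inr (by ring)))
    · intro h; rw [h] at hj2; exact hj2 (cadj (j+3) (j+2) (Or.inl (by ring)))
  -- disjointness
  have hdisj : ∀ i k x, W i x → W k x → i = k := by
    intro i k x hi hk
    by_contra hne
    obtain ⟨a, hab, ha, hb⟩ := (by decide : ∀ i k : ZMod 5, i ≠ k → ∃ a : ZMod 5,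
      (a+1 = a + 1) ∧ (a = i-1 ∨ a = i+1 ∨ a = k-1 ∨ a = k+1) ∧
      (a+1 = i-1 ∨ a+1 = i+1 ∨ a+1 = k-1 ∨ a+1 = k+1)) i k hne
    have getadj : ∀ b : ZMod 5, (b = i-1 ∨ b = i+1 ∨ b = k-1 ∨ b = k+1) → G.Adj x (v b) := by
      rintro b (rfl | rfl | rfl | rfl)
      exacts [hi.1, hi.2, hk.1, hk.2]
    exact tri (getadj a ha) (getadj (a+1) hb) (cadj a (a+1) (Or.inr rfl))
  -- closure under adjacency
  have hclose : ∀ x z, (∃ i, W i x) → G.Adj x z → ∃ k, W k z := by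
    rintro x z ⟨i, hi⟩ hxz
    by_cases hc1 : ∃ k, z = v k
    · obtain ⟨k, rfl⟩ := hc1; exact ⟨k, hWv k⟩
    by_cases hc2 : ∃ k, G.Adj z (v k)
    · obtain ⟨k, hk⟩ := hc2; exact hclass z k hk
    push_neg at hc1 hc2
    obtain ⟨hn1, hn2, hn3⟩ := hWnadj i x hi
    exfalso
    refine p5_free hP5 hxz.symm hi.2 (cadj (i+1) (i+2) (Or.inr (by ring)))
      (cadj (i+2) (i+3) (Or.inr (by ring)))
      (hc2 (i+1)) (hc2 (i+2)) (hc2 (i+3)) hn2 hn3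
      (ncyc (i+1) (i+3) ((by decide : ∀ i : ZMod 5, ¬(i+1 = (i+3)+1 ∨ i+3 = (i+1)+1)) i))
      (hc1 (i+1)) (hc1 (i+2)) (hc1 (i+3)) ?_ ?_
      (vne (i+1) (i+3) ((by decide : ∀ i : ZMod 5, i+1 ≠ i+3) i))
    · intro h; rw [h] at hn3; exact hn3 (cadj (i+2) (i+3) (Or.inr (by ring)))
    · intro h; rw [h] at hn2; exact hn2 (cadj (i+3) (i+2) (Or.inl (by ring)))
  -- every vertex of the component is in some class
  have hsupp1 : ∀ x, x ∈ c.supp → ∃ i, W i x := by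
    intro x hx
    have hreach : G.Reachable (v 0) x :=
      ConnectedComponent.exact (((ConnectedComponent.mem_supp_iff _ _).mp
        (hsuppv 0)).trans ((ConnectedComponent.mem_supp_iff _ _).mp hx).symm)
    obtain ⟨p⟩ := hreach
    have aux : ∀ (a b : V) (p : G.Walk a b), (∃ i, W i a) → ∃ i, W i b := by
      intro a b p
      induction p with
      | nil => exact id
      | cons h q ih => exact fun ha => ih (hclose _ _ ha h)
    exact aux _ _ p ⟨0, hWv 0⟩
  have hsupp2 : ∀ i x, W i x → x ∈ c.supp := by
    intro i x hx
    rw [ConnectedComponent.mem_supp_iff,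
      ConnectedComponent.sound hx.2.reachable]
    exact (ConnectedComponent.mem_supp_iff _ _).mp (hsuppv (i+1))
  -- adjacency classification
  have key : ∀ x y i, W i x → W (i+1) y → G.Adj x y := by
    intro x y i hx hy
    by_contra hnadj
    have hy1 : G.Adj y (v i) := by
      have := hy.1; rwa [(by decide : ∀ i : ZMod 5, (i+1)-1 = i) i] at this
    have hy2 : G.Adj y (v (i+2)) := by
      have := hy.2; rwa [(by decide : ∀ i : ZMod 5, (i+1)+1 = i+2) i] at this
    have hyn := hWnadj (i+1) y hy
    have hyn3 : ¬G.Adj y (v (i-1)) := by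
      have := hyn.2.2
      rwa [(by decide : ∀ i : ZMod 5, (i+1)+3 = i-1) i] at this
    obtain ⟨hn1, hn2, hn3⟩ := hWnadj i x hx
    refine p5_free hP5 hx.1 (cadj (i-1) i (Or.inr (by ring))).symm.symm hy1.symm hy2
      hn1 hnadj hn2 (fun h => hyn3 h.symm)
      (ncyc (i-1) (i+2) ((by decide : ∀ i : ZMod 5, ¬(i-1 = (i+2)+1 ∨ i+2 = (i-1)+1)) i))
      ((hWnadj i (v i) (hWv i)).2.1 : ¬G.Adj (v i) (v (i+2)))
      ?_ ?_ ?_ ?_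
      (vne (i-1) (i+2) ((by decide : ∀ i : ZMod 5, i-1 ≠ i+2) i))
      (vne i (i+2) ((by decide : ∀ i : ZMod 5, i ≠ i+2) i))
    · intro h; rw [h] at hnadj; exact hnadj hy1.symm
    · intro h; subst h
      exact ((by decide : ∀ i : ZMod 5, i ≠ i+1) i) (hdisj i (i+1) x hx hy)
    · intro h; rw [h] at hn3; exact hn3 (cadj (i+2) (i+3) (Or.inr (by ring)))
    · intro h
      exact ((by decide : ∀ i : ZMod 5, i+1 ≠ i-1) i)
        (hdisj (i+1) (i-1) y hy (h ▸ hWv (i-1)))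
  have hadjclass : ∀ x y i k, W i x → W k y → (G.Adj x y ↔ (i = k + 1 ∨ k = i + 1)) := by
    intro x y i k hi hk
    constructor
    · intro hxy
      by_contra hcon
      have hik : i ≠ k := by
        rintro rfl; exact tri hxy hi.2 hk.2
      have h2 : k ≠ i + 2 := by
        rintro rfl
        have := hk.1
        rw [(by decide : ∀ i : ZMod 5, (i+2)-1 = i+1) i] at this
        exact tri hxy hi.2 this
      have h3 : i ≠ k + 2 := by
        rintro rfl
        have := hi.1
        rw [(by decide : ∀ k : ZMod 5, (k+2)-1 = k+1) k] at this
        exact tri hxy.symm hk.2 this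
      exact hcon ((by decide : ∀ i k : ZMod 5, i ≠ k → k ≠ i+2 → i ≠ k+2 →
        (i = k+1 ∨ k = i+1)) i k hik h2 h3)
    · rintro (h | h)
      · exact (key y x k hk (h ▸ hi)).symm
      · exact key x y i hi (h ▸ hk)
  -- build the isomorphism
  let cl : ↥c.supp → ZMod 5 := fun x => Classical.choose (hsupp1 x.1 x.2)
  have hclW : ∀ x : ↥c.supp, W (cl x) x.1 := fun x => Classical.choose_spec (hsupp1 x.1 x.2)
  have hclu : ∀ (x : ↥c.supp) (i : ZMod 5), W i x.1 → cl x = i :=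
    fun x i h => hdisj _ _ _ (hclW x) h
  have master : ∀ x y : ↥c.supp, G.Adj x.1 y.1 ↔ (cl x = cl y + 1 ∨ cl y = cl x + 1) :=
    fun x y => hadjclass _ _ _ _ (hclW x) (hclW y)
  haveI : Fintype ↥c.supp := Fintype.ofFinite _
  haveI hft : ∀ i : ZMod 5, Fintype {x : ↥c.supp // cl x = i} := fun i => Fintype.ofFinite _
  refine ⟨fun i => @Fintype.card {x : ↥c.supp // cl x = i} (hft i), ?_, ?_⟩
  · intro i
    rw [Fintype.card_pos_iff]
    exact ⟨⟨⟨v i, hsuppv i⟩, hclu _ i (hWv i)⟩⟩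
  · let E : ↥c.supp ≃ Σ i : ZMod 5, Fin (@Fintype.card {x : ↥c.supp // cl x = i} (hft i)) :=
      (Equiv.sigmaFiberEquiv cl).symm.trans
        (Equiv.sigmaCongrRight fun i => @Fintype.equivFin {x : ↥c.supp // cl x = i} (hft i))
    have hE1 : ∀ x : ↥c.supp, (E x).1 = cl x := fun x => rfl
    refine ⟨⟨E, ?_⟩⟩
    intro a b
    show ((E a).1 ≠ (E b).1 ∧ ((E a).1 = (E b).1 + 1 ∨ (E b).1 = (E a).1 + 1)) ↔ _
    rw [hE1 a, hE1 b]
    have hind : (G.induce c.supp).Adj a b ↔ G.Adj a.1 b.1 := by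
      simp [SimpleGraph.comap]
    rw [hind, master a b]
    constructor
    · exact fun h => h.2
    · intro h
      exact ⟨(by decide : ∀ i k : ZMod 5, (i = k+1 ∨ k = i+1) → i ≠ k) _ _ h, h⟩
end

section
/- Let G be a connected {P5, K4, Kite, Bull}-free graph containing an induced 5-cycle with vertex set N0, and let B be the set of vertices at distance 1 from N0 adjacent to all five vertices of N0. Then B is an independent set. -/
open SimpleGraph Finset

theorem stmt_3 {V : Type*} [Fintype V] (G : SimpleGraph V) (hconn : G.Connected)
    (hP5 : ¬ HasInducedCopy G (pathGraph 5))
    (hK4 : ¬ HasInducedCopy G (⊤ : SimpleGraph (Fin 4)))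
    (hKite : ¬ HasInducedCopy G kite)
    (hBull : ¬ HasInducedCopy G bull)
    (v : ZMod 5 → V) (hinj : Function.Injective v)
    (hC : ∀ i j, G.Adj (v i) (v j) ↔ (cyc 5).Adj i j)
    (B : Set V) (hB : B = {x | x ∉ Set.range v ∧ ∀ i, G.Adj x (v i)}) :
    ∀ x ∈ B, ∀ y ∈ B, ¬ G.Adj x y := by
  subst hB
  rintro x ⟨hxr, hxa⟩ y ⟨hyr, hya⟩ hxy
  apply hK4
  have hv01 : G.Adj (v 0) (v 1) := (hC 0 1).mpr (show (0 : ZMod 5) ≠ 1 ∧ _ from ⟨by decide, Or.inr rfl⟩)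
  have hx0 : x ≠ v 0 := fun h => hxr ⟨0, h.symm⟩
  have hx1 : x ≠ v 1 := fun h => hxr ⟨1, h.symm⟩
  have hy0 : y ≠ v 0 := fun h => hyr ⟨0, h.symm⟩
  have hy1 : y ≠ v 1 := fun h => hyr ⟨1, h.symm⟩
  have hv : v 0 ≠ v 1 := fun h => by have := hinj h; exact absurd this (by decide)
  refine ⟨⟨![x, y, v 0, v 1], ?_⟩, ?_⟩
  · intro a b hab
    fin_cases a <;> fin_cases b <;>
      simp_all [hxy.ne, hxy.ne', hv.symm] <;> tauto
  · intro a b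
    change G.Adj (![x, y, v 0, v 1] a) (![x, y, v 0, v 1] b) ↔ _
    fin_cases a <;> fin_cases b <;>
      simp [top_adj, hxy, hxy.symm, hv01, hv01.symm, hxa 0, hxa 1, hya 0, hya 1,
        (hxa 0).symm, (hxa 1).symm, (hya 0).symm, (hya 1).symm, G.irrefl]
end

section
/- Let G be a connected {P6, C5, K_{1,3}}-free graph containing an induced 6-cycle with vertex set N0. If x is a vertex at distance 1 from N0, then the subgraph induced by N(x) ∩ N0 is isomorphic either to P3 (a path on 3 vertices) or to 2K2 (two disjoint edges). -/
open SimpleGraph Finset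

/-- Two disjoint edges. -/
def twoK2 : SimpleGraph (Fin 4) := SimpleGraph.fromEdgeSet {s(0,1), s(2,3)}

instance cycDecide (n : ℕ) : DecidableRel (cyc n).Adj :=
  fun i j => inferInstanceAs (Decidable (i ≠ j ∧ (i = j + 1 ∨ j = i + 1)))

instance cyc5Decide (a b : Fin 5) : Decidable ((cyc 5).Adj a b) := cycDecide 5 a b

instance twoK2Decide : DecidableRel twoK2.Adj :=
  fun a b => inferInstanceAs (Decidable ((s(a,b) = s(0,1) ∨ s(a,b) = s(2,3)) ∧ a ≠ b))

instance cbgDecide : DecidableRel (completeBipartiteGraph (Fin 1) (Fin 3)).Adj :=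
  fun a b => inferInstanceAs (Decidable ((a.isLeft ∧ b.isRight) ∨ (a.isRight ∧ b.isLeft)))

lemma cyc_shift (i a b : ZMod 6) : (cyc 6).Adj (i + a) (i + b) ↔ (cyc 6).Adj a b := by
  show (i + a ≠ i + b ∧ (i + a = i + b + 1 ∨ i + b = i + a + 1)) ↔
    (a ≠ b ∧ (a = b + 1 ∨ b = a + 1))
  rw [add_assoc, add_assoc]
  simp [add_right_inj]

lemma adjP {V : Type*} {G : SimpleGraph V} {v : ZMod 6 → V}
    (hC : ∀ i j, G.Adj (v i) (v j) ↔ (cyc 6).Adj i j)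
    (i a b : ZMod 6) (h : (cyc 6).Adj a b) : G.Adj (v (i + a)) (v (i + b)) :=
  (hC _ _).mpr ((cyc_shift i a b).mpr h)

lemma nadjP {V : Type*} {G : SimpleGraph V} {v : ZMod 6 → V}
    (hC : ∀ i j, G.Adj (v i) (v j) ↔ (cyc 6).Adj i j)
    (i a b : ZMod 6) (h : ¬ (cyc 6).Adj a b) : ¬ G.Adj (v (i + a)) (v (i + b)) :=
  fun hh => h ((cyc_shift i a b).mp ((hC _ _).mp hh))

lemma voff {V : Type*} {v : ZMod 6 → V} (hinj : Function.Injective v)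
    (i a b : ZMod 6) (h : a ≠ b) : v (i + a) ≠ v (i + b) :=
  fun hh => h (add_left_cancel (hinj hh))

lemma kill_claw1 {V : Type*} {G : SimpleGraph V} {v : ZMod 6 → V} {x : V}
    (hinj : Function.Injective v)
    (hC : ∀ i j, G.Adj (v i) (v j) ↔ (cyc 6).Adj i j)
    (hxv : ∀ j, x ≠ v j)
    (hclaw : ¬ HasInducedCopy G (completeBipartiteGraph (Fin 1) (Fin 3)))
    (i : ZMod 6) (h0 : G.Adj x (v (i + 0)))
    (h1 : ¬ G.Adj x (v (i + 1))) (h5 : ¬ G.Adj x (v (i + 5))) : False := by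
  apply hclaw
  refine ⟨⟨Sum.elim (fun _ => v (i + 0)) ![x, v (i + 1), v (i + 5)], ?_⟩, ?_⟩
  · rintro (a | a) (b | b) h
    · exact congrArg _ (Subsingleton.elim a b)
    all_goals fin_cases a <;> fin_cases b <;>
      first
      | rfl
      | exact absurd h (hxv _)
      | exact absurd h (hxv _).symm
      | exact absurd h (voff hinj i _ _ (by decide))
      | exact absurd h (voff hinj i _ _ (by decide)).symm
      | exact absurd h.symm (hxv _)
  · rintro (a | a) (b | b) <;> fin_cases a <;> fin_cases b <;>
      first
      | exact iff_of_false G.irrefl (by decide)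
      | exact iff_of_true h0 (by decide)
      | exact iff_of_true h0.symm (by decide)
      | exact iff_of_false h1 (by decide)
      | exact iff_of_false (fun h => h1 h.symm) (by decide)
      | exact iff_of_false h5 (by decide)
      | exact iff_of_false (fun h => h5 h.symm) (by decide)
      | exact iff_of_true (adjP hC i _ _ (by decide)) (by decide)
      | exact iff_of_true (adjP hC i _ _ (by decide)).symm (by decide)
      | exact iff_of_false (nadjP hC i _ _ (by decide)) (by decide)
      | exact iff_of_false (fun h => nadjP hC i _ _ (by decide) h.symm) (by decide)

instance pgDecide (n : ℕ) : DecidableRel (pathGraph n).Adj :=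
  fun a b => decidable_of_iff _ (SimpleGraph.pathGraph_adj).symm

example : (pathGraph 6).Adj 0 1 := by decide
example : ¬ (pathGraph 6).Adj 0 2 := by decide

lemma kill_claw2 {V : Type*} {G : SimpleGraph V} {v : ZMod 6 → V} {x : V}
    (hinj : Function.Injective v)
    (hC : ∀ i j, G.Adj (v i) (v j) ↔ (cyc 6).Adj i j)
    (hxv : ∀ j, x ≠ v j)
    (hclaw : ¬ HasInducedCopy G (completeBipartiteGraph (Fin 1) (Fin 3)))
    (i : ZMod 6) (h0 : G.Adj x (v (i + 0)))
    (h2 : G.Adj x (v (i + 2))) (h4 : G.Adj x (v (i + 4))) : False := by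
  apply hclaw
  refine ⟨⟨Sum.elim (fun _ => x) ![v (i + 0), v (i + 2), v (i + 4)], ?_⟩, ?_⟩
  · rintro (a | a) (b | b) h
    · exact congrArg _ (Subsingleton.elim a b)
    all_goals fin_cases a <;> fin_cases b <;>
      first
      | rfl
      | exact absurd h (hxv _)
      | exact absurd h (hxv _).symm
      | exact absurd h (voff hinj i _ _ (by decide))
      | exact absurd h.symm (hxv _)
  · rintro (a | a) (b | b) <;> fin_cases a <;> fin_cases b <;>
      first
      | exact iff_of_false G.irrefl (by decide)
      | exact iff_of_true h0 (by decide)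
      | exact iff_of_true h0.symm (by decide)
      | exact iff_of_true h2 (by decide)
      | exact iff_of_true h2.symm (by decide)
      | exact iff_of_true h4 (by decide)
      | exact iff_of_true h4.symm (by decide)
      | exact iff_of_false (nadjP hC i _ _ (by decide)) (by decide)

lemma kill_c5 {V : Type*} {G : SimpleGraph V} {v : ZMod 6 → V} {x : V}
    (hinj : Function.Injective v)
    (hC : ∀ i j, G.Adj (v i) (v j) ↔ (cyc 6).Adj i j)
    (hxv : ∀ j, x ≠ v j)
    (hC5 : ¬ HasInducedCopy G (cyc 5))
    (i : ZMod 6) (h0 : G.Adj x (v (i + 0))) (h3 : G.Adj x (v (i + 3)))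
    (n4 : ¬ G.Adj x (v (i + 4))) (n5 : ¬ G.Adj x (v (i + 5))) : False := by
  apply hC5
  refine ⟨⟨(![x, v (i + 0), v (i + 5), v (i + 4), v (i + 3)] : Fin 5 → V), ?_⟩, ?_⟩
  · intro a b h
    fin_cases a <;> fin_cases b <;>
      first
      | rfl
      | exact absurd h (hxv _)
      | exact absurd h (voff hinj i _ _ (by decide))
      | exact absurd h.symm (hxv _)
  · intro a b
    fin_cases a <;> fin_cases b <;>
      first
      | exact iff_of_false G.irrefl (by decide)
      | exact iff_of_true h0 (by decide)
      | exact iff_of_true h0.symm (by decide)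
      | exact iff_of_true h3 (by decide)
      | exact iff_of_true h3.symm (by decide)
      | exact iff_of_false n4 (by decide)
      | exact iff_of_false (fun h => n4 h.symm) (by decide)
      | exact iff_of_false n5 (by decide)
      | exact iff_of_false (fun h => n5 h.symm) (by decide)
      | exact iff_of_true (adjP hC i _ _ (by decide)) (by decide)
      | exact iff_of_false (nadjP hC i _ _ (by decide)) (by decide)

lemma kill_p6 {V : Type*} {G : SimpleGraph V} {v : ZMod 6 → V} {x : V}
    (hinj : Function.Injective v)
    (hC : ∀ i j, G.Adj (v i) (v j) ↔ (cyc 6).Adj i j)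
    (hxv : ∀ j, x ≠ v j)
    (hP6 : ¬ HasInducedCopy G (pathGraph 6))
    (i : ZMod 6) (h0 : G.Adj x (v (i + 0)))
    (n2 : ¬ G.Adj x (v (i + 2))) (n3 : ¬ G.Adj x (v (i + 3)))
    (n4 : ¬ G.Adj x (v (i + 4))) (n5 : ¬ G.Adj x (v (i + 5))) : False := by
  apply hP6
  refine ⟨⟨(![v (i + 2), v (i + 3), v (i + 4), v (i + 5), v (i + 0), x] : Fin 6 → V), ?_⟩, ?_⟩
  · intro a b h
    fin_cases a <;> fin_cases b <;>
      first
      | rfl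
      | exact absurd h (hxv _)
      | exact absurd h (voff hinj i _ _ (by decide))
      | exact absurd h.symm (hxv _)
  · intro a b
    fin_cases a <;> fin_cases b <;>
      first
      | exact iff_of_false G.irrefl (by decide)
      | exact iff_of_true h0 (by decide)
      | exact iff_of_true h0.symm (by decide)
      | exact iff_of_false n2 (by decide)
      | exact iff_of_false (fun h => n2 h.symm) (by decide)
      | exact iff_of_false n3 (by decide)
      | exact iff_of_false (fun h => n3 h.symm) (by decide)
      | exact iff_of_false n4 (by decide)
      | exact iff_of_false (fun h => n4 h.symm) (by decide)
      | exact iff_of_false n5 (by decide)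
      | exact iff_of_false (fun h => n5 h.symm) (by decide)
      | exact iff_of_true (adjP hC i _ _ (by decide)) (by decide)
      | exact iff_of_false (nadjP hC i _ _ (by decide)) (by decide)

lemma build_isoP3 {V : Type*} (G : SimpleGraph V) (a b c : V)
    (hab : G.Adj a b) (hbc : G.Adj b c) (hac : ¬ G.Adj a c) (hac' : a ≠ c) :
    Nonempty (G.induce ({a, b, c} : Set V) ≃g pathGraph 3) := by
  classical
  have hba : b ≠ a := hab.ne'
  have hcb : c ≠ b := hbc.ne'
  have hca : c ≠ a := hac'.symm
  refine ⟨SimpleGraph.Iso.symm ⟨⟨(![⟨a, by simp⟩, ⟨b, by simp⟩, ⟨c, by simp⟩] :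
      Fin 3 → ({a, b, c} : Set V)),
      fun y => if y.1 = a then 0 else if y.1 = b then 1 else 2, ?_, ?_⟩, ?_⟩⟩
  · intro j
    fin_cases j <;> simp [hba, hcb, hca]
  · rintro ⟨y, hy⟩
    simp only [Set.mem_insert_iff, Set.mem_singleton_iff] at hy
    rcases hy with rfl | rfl | rfl <;> simp [hba, hcb, hca]
  · intro u w
    fin_cases u <;> fin_cases w <;>
      first
      | exact iff_of_false G.irrefl (by decide)
      | exact iff_of_true hab (by decide)
      | exact iff_of_true hab.symm (by decide)
      | exact iff_of_true hbc (by decide)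
      | exact iff_of_true hbc.symm (by decide)
      | exact iff_of_false hac (by decide)
      | exact iff_of_false (fun h => hac h.symm) (by decide)

lemma build_iso2K2 {V : Type*} (G : SimpleGraph V) (a b c d : V)
    (hab : G.Adj a b) (hcd : G.Adj c d)
    (hac : ¬ G.Adj a c) (had : ¬ G.Adj a d) (hbc : ¬ G.Adj b c) (hbd : ¬ G.Adj b d)
    (hac' : a ≠ c) (had' : a ≠ d) (hbc' : b ≠ c) (hbd' : b ≠ d) :
    Nonempty (G.induce ({a, b, c, d} : Set V) ≃g twoK2) := by
  classical
  have hba : b ≠ a := hab.ne'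
  have hdc : d ≠ c := hcd.ne'
  have hca : c ≠ a := hac'.symm
  have hda : d ≠ a := had'.symm
  have hcb : c ≠ b := hbc'.symm
  have hdb : d ≠ b := hbd'.symm
  refine ⟨SimpleGraph.Iso.symm ⟨⟨(![⟨a, by simp⟩, ⟨b, by simp⟩, ⟨c, by simp⟩, ⟨d, by simp⟩] :
      Fin 4 → ({a, b, c, d} : Set V)),
      fun y => if y.1 = a then 0 else if y.1 = b then 1 else if y.1 = c then 2 else 3,
      ?_, ?_⟩, ?_⟩⟩
  · intro j
    fin_cases j <;> simp [hba, hca, hda, hcb, hdb, hdc]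
  · rintro ⟨y, hy⟩
    simp only [Set.mem_insert_iff, Set.mem_singleton_iff] at hy
    rcases hy with rfl | rfl | rfl | rfl <;> simp [hba, hca, hda, hcb, hdb, hdc]
  · intro u w
    fin_cases u <;> fin_cases w <;>
      first
      | exact iff_of_false G.irrefl (by decide)
      | exact iff_of_true hab (by decide)
      | exact iff_of_true hab.symm (by decide)
      | exact iff_of_true hcd (by decide)
      | exact iff_of_true hcd.symm (by decide)
      | exact iff_of_false hac (by decide)
      | exact iff_of_false (fun h => hac h.symm) (by decide)
      | exact iff_of_false had (by decide)
      | exact iff_of_false (fun h => had h.symm) (by decide)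
      | exact iff_of_false hbc (by decide)
      | exact iff_of_false (fun h => hbc h.symm) (by decide)
      | exact iff_of_false hbd (by decide)
      | exact iff_of_false (fun h => hbd h.symm) (by decide)

lemma goodP3 {V : Type*} {G : SimpleGraph V} {v : ZMod 6 → V} {x : V}
    (hinj : Function.Injective v)
    (hC : ∀ i j, G.Adj (v i) (v j) ↔ (cyc 6).Adj i j)
    (i : ZMod 6) (h0 : G.Adj x (v (i + 0))) (h1 : G.Adj x (v (i + 1)))
    (h2 : G.Adj x (v (i + 2))) (n3 : ¬ G.Adj x (v (i + 3)))
    (n4 : ¬ G.Adj x (v (i + 4))) (n5 : ¬ G.Adj x (v (i + 5))) :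
    Nonempty (G.induce {y | y ∈ Set.range v ∧ G.Adj x y} ≃g pathGraph 3) := by
  have hSet : {y | y ∈ Set.range v ∧ G.Adj x y} =
      ({v (i + 0), v (i + 1), v (i + 2)} : Set V) := by
    ext y
    simp only [Set.mem_setOf_eq, Set.mem_insert_iff, Set.mem_singleton_iff]
    constructor
    · rintro ⟨⟨j, rfl⟩, hadj⟩
      obtain ⟨k, rfl⟩ : ∃ k, j = i + k := ⟨j - i, by ring⟩
      fin_cases k
      · exact Or.inl rfl
      · exact Or.inr (Or.inl rfl)
      · exact Or.inr (Or.inr rfl)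
      · exact absurd hadj n3
      · exact absurd hadj n4
      · exact absurd hadj n5
    · rintro (rfl | rfl | rfl)
      exacts [⟨⟨_, rfl⟩, h0⟩, ⟨⟨_, rfl⟩, h1⟩, ⟨⟨_, rfl⟩, h2⟩]
  rw [hSet]
  exact build_isoP3 G _ _ _ (adjP hC i 0 1 (by decide)) (adjP hC i 1 2 (by decide))
    (nadjP hC i 0 2 (by decide)) (voff hinj i 0 2 (by decide))

lemma good2K2 {V : Type*} {G : SimpleGraph V} {v : ZMod 6 → V} {x : V}
    (hinj : Function.Injective v)
    (hC : ∀ i j, G.Adj (v i) (v j) ↔ (cyc 6).Adj i j)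
    (i : ZMod 6) (h0 : G.Adj x (v (i + 0))) (h1 : G.Adj x (v (i + 1)))
    (n2 : ¬ G.Adj x (v (i + 2))) (h3 : G.Adj x (v (i + 3)))
    (h4 : G.Adj x (v (i + 4))) (n5 : ¬ G.Adj x (v (i + 5))) :
    Nonempty (G.induce {y | y ∈ Set.range v ∧ G.Adj x y} ≃g twoK2) := by
  have hSet : {y | y ∈ Set.range v ∧ G.Adj x y} =
      ({v (i + 0), v (i + 1), v (i + 3), v (i + 4)} : Set V) := by
    ext y
    simp only [Set.mem_setOf_eq, Set.mem_insert_iff, Set.mem_singleton_iff]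
    constructor
    · rintro ⟨⟨j, rfl⟩, hadj⟩
      obtain ⟨k, rfl⟩ : ∃ k, j = i + k := ⟨j - i, by ring⟩
      fin_cases k
      · exact Or.inl rfl
      · exact Or.inr (Or.inl rfl)
      · exact absurd hadj n2
      · exact Or.inr (Or.inr (Or.inl rfl))
      · exact Or.inr (Or.inr (Or.inr rfl))
      · exact absurd hadj n5
    · rintro (rfl | rfl | rfl | rfl)
      exacts [⟨⟨_, rfl⟩, h0⟩, ⟨⟨_, rfl⟩, h1⟩, ⟨⟨_, rfl⟩, h3⟩, ⟨⟨_, rfl⟩, h4⟩]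
  rw [hSet]
  exact build_iso2K2 G _ _ _ _ (adjP hC i 0 1 (by decide)) (adjP hC i 3 4 (by decide))
    (nadjP hC i 0 3 (by decide)) (nadjP hC i 0 4 (by decide))
    (nadjP hC i 1 3 (by decide)) (nadjP hC i 1 4 (by decide))
    (voff hinj i 0 3 (by decide)) (voff hinj i 0 4 (by decide))
    (voff hinj i 1 3 (by decide)) (voff hinj i 1 4 (by decide))

theorem stmt_6 {V : Type*} [Fintype V] (G : SimpleGraph V) (hconn : G.Connected)
    (hP6 : ¬ HasInducedCopy G (pathGraph 6))
    (hC5 : ¬ HasInducedCopy G (cyc 5))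
    (hClaw : ¬ HasInducedCopy G (completeBipartiteGraph (Fin 1) (Fin 3)))
    (v : ZMod 6 → V) (hinj : Function.Injective v)
    (hC : ∀ i j, G.Adj (v i) (v j) ↔ (cyc 6).Adj i j)
    (x : V) (hx : x ∉ Set.range v) (hx1 : ∃ i, G.Adj x (v i)) :
    Nonempty (G.induce {y | y ∈ Set.range v ∧ G.Adj x y} ≃g pathGraph 3) ∨
    Nonempty (G.induce {y | y ∈ Set.range v ∧ G.Adj x y} ≃g twoK2) := by
  have hxv : ∀ j, x ≠ v j := fun j h => hx ⟨j, h.symm⟩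
  by_cases h0 : G.Adj x (v 0) <;> by_cases h1 : G.Adj x (v 1) <;>
    by_cases h2 : G.Adj x (v 2) <;> by_cases h3 : G.Adj x (v 3) <;>
    by_cases h4 : G.Adj x (v 4) <;> by_cases h5 : G.Adj x (v 5) <;>
    first
    | exact Or.inl (goodP3 hinj hC 0 h0 h1 h2 h3 h4 h5)
    | exact Or.inl (goodP3 hinj hC 1 h1 h2 h3 h4 h5 h0)
    | exact Or.inl (goodP3 hinj hC 2 h2 h3 h4 h5 h0 h1)
    | exact Or.inl (goodP3 hinj hC 3 h3 h4 h5 h0 h1 h2)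
    | exact Or.inl (goodP3 hinj hC 4 h4 h5 h0 h1 h2 h3)
    | exact Or.inl (goodP3 hinj hC 5 h5 h0 h1 h2 h3 h4)
    | exact Or.inr (good2K2 hinj hC 0 h0 h1 h2 h3 h4 h5)
    | exact Or.inr (good2K2 hinj hC 1 h1 h2 h3 h4 h5 h0)
    | exact Or.inr (good2K2 hinj hC 2 h2 h3 h4 h5 h0 h1)
    | exact Or.inr (good2K2 hinj hC 3 h3 h4 h5 h0 h1 h2)
    | exact Or.inr (good2K2 hinj hC 4 h4 h5 h0 h1 h2 h3)
    | exact Or.inr (good2K2 hinj hC 5 h5 h0 h1 h2 h3 h4)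
    | exact (kill_claw1 hinj hC hxv hClaw 0 h0 h1 h5).elim
    | exact (kill_claw1 hinj hC hxv hClaw 1 h1 h2 h0).elim
    | exact (kill_claw1 hinj hC hxv hClaw 2 h2 h3 h1).elim
    | exact (kill_claw1 hinj hC hxv hClaw 3 h3 h4 h2).elim
    | exact (kill_claw1 hinj hC hxv hClaw 4 h4 h5 h3).elim
    | exact (kill_claw1 hinj hC hxv hClaw 5 h5 h0 h4).elim
    | exact (kill_claw2 hinj hC hxv hClaw 0 h0 h2 h4).elim
    | exact (kill_claw2 hinj hC hxv hClaw 1 h1 h3 h5).elim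
    | exact (kill_claw2 hinj hC hxv hClaw 2 h2 h4 h0).elim
    | exact (kill_claw2 hinj hC hxv hClaw 3 h3 h5 h1).elim
    | exact (kill_claw2 hinj hC hxv hClaw 4 h4 h0 h2).elim
    | exact (kill_claw2 hinj hC hxv hClaw 5 h5 h1 h3).elim
    | exact (kill_c5 hinj hC hxv hC5 0 h0 h3 h4 h5).elim
    | exact (kill_c5 hinj hC hxv hC5 1 h1 h4 h5 h0).elim
    | exact (kill_c5 hinj hC hxv hC5 2 h2 h5 h0 h1).elim
    | exact (kill_c5 hinj hC hxv hC5 3 h3 h0 h1 h2).elim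
    | exact (kill_c5 hinj hC hxv hC5 4 h4 h1 h2 h3).elim
    | exact (kill_c5 hinj hC hxv hC5 5 h5 h2 h3 h4).elim
    | exact (kill_p6 hinj hC hxv hP6 0 h0 h2 h3 h4 h5).elim
    | exact (kill_p6 hinj hC hxv hP6 1 h1 h3 h4 h5 h0).elim
    | exact (kill_p6 hinj hC hxv hP6 2 h2 h4 h5 h0 h1).elim
    | exact (kill_p6 hinj hC hxv hP6 3 h3 h5 h0 h1 h2).elim
    | exact (kill_p6 hinj hC hxv hP6 4 h4 h0 h1 h2 h3).elim
    | exact (kill_p6 hinj hC hxv hP6 5 h5 h1 h2 h3 h4).elim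
    | (obtain ⟨i, hi⟩ := hx1; fin_cases i <;> first | exact (h0 hi).elim | exact (h1 hi).elim | exact (h2 hi).elim | exact (h3 hi).elim | exact (h4 hi).elim | exact (h5 hi).elim)
end

section
/- Let G be a connected {P6, C5, K_{1,3}}-free graph containing an induced 6-cycle v0v1...v5, and for 0<=i<=5 let A_i = {v_i} ∪ {x : N(x) ∩ {v0,...,v5} = {v_{i-1}, v_i, v_{i+1}} (indices mod 6)}. Then each A_i induces a complete subgraph, [A_i, A_{i+1}] is complete, and [A_i, A_{i+2}] = [A_i, A_{i+3}] = ∅ for all i (indices mod 6); that is, A_0 ∪ ... ∪ A_5 induces a complete expansion of C6. -/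
open SimpleGraph Finset

instance cycAdjDecidable (n : ℕ) : DecidableRel (cyc n).Adj :=
  fun i j => inferInstanceAs (Decidable (i ≠ j ∧ (i = j + 1 ∨ j = i + 1)))

instance pathAdjDecidable (n : ℕ) : DecidableRel (pathGraph n).Adj :=
  fun u v => decidable_of_iff _ pathGraph_adj.symm

lemma zmod5_cases (p : ZMod 5) : p = 0 ∨ p = 1 ∨ p = 2 ∨ p = 3 ∨ p = 4 := by
  revert p; decide

lemma fin6_cases (p : Fin 6) : p = 0 ∨ p = 1 ∨ p = 2 ∨ p = 3 ∨ p = 4 ∨ p = 5 := by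
  revert p; decide

lemma claw_helper {V : Type*} {G : SimpleGraph V} (c a b d : V)
    (hca : G.Adj c a) (hcb : G.Adj c b) (hcd : G.Adj c d)
    (hab : ¬ G.Adj a b) (had : ¬ G.Adj a d) (hbd : ¬ G.Adj b d)
    (nab : a ≠ b) (nad : a ≠ d) (nbd : b ≠ d) :
    HasInducedCopy G (completeBipartiteGraph (Fin 1) (Fin 3)) := by
  have hca' := hca.symm; have hcb' := hcb.symm; have hcd' := hcd.symm
  have hba : ¬ G.Adj b a := fun h => hab h.symm
  have hda : ¬ G.Adj d a := fun h => had h.symm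
  have hdb : ¬ G.Adj d b := fun h => hbd h.symm
  have hfi : Function.Injective (Sum.elim (fun _ => c) ![a, b, d] : Fin 1 ⊕ Fin 3 → V) := by
    rintro (p | p) (q | q) h <;> fin_cases p <;> fin_cases q <;> simp_all
  refine ⟨⟨Sum.elim (fun _ => c) ![a, b, d], hfi⟩, ?_⟩
  · rintro (p | p) (q | q) <;> fin_cases p <;> fin_cases q <;>
      simp_all [completeBipartiteGraph]

lemma c5_helper {V : Type*} {G : SimpleGraph V} (a0 a1 a2 a3 a4 : V)
    (h01 : G.Adj a0 a1) (h12 : G.Adj a1 a2) (h23 : G.Adj a2 a3)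
    (h34 : G.Adj a3 a4) (h40 : G.Adj a4 a0)
    (n02 : ¬ G.Adj a0 a2) (n03 : ¬ G.Adj a0 a3) (n13 : ¬ G.Adj a1 a3)
    (n14 : ¬ G.Adj a1 a4) (n24 : ¬ G.Adj a2 a4)
    (e02 : a0 ≠ a2) (e03 : a0 ≠ a3) (e13 : a1 ≠ a3) (e14 : a1 ≠ a4) (e24 : a2 ≠ a4) :
    HasInducedCopy G (cyc 5) := by
  have n20 : ¬ G.Adj a2 a0 := fun h => n02 h.symm
  have n30 : ¬ G.Adj a3 a0 := fun h => n03 h.symm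
  have n31 : ¬ G.Adj a3 a1 := fun h => n13 h.symm
  have n41 : ¬ G.Adj a4 a1 := fun h => n14 h.symm
  have n42 : ¬ G.Adj a4 a2 := fun h => n24 h.symm
  have h10 := h01.symm; have h21 := h12.symm; have h32 := h23.symm
  have h43 := h34.symm; have h04 := h40.symm
  set f : ZMod 5 → V := ![a0, a1, a2, a3, a4] with hfdef
  have hf0 : f 0 = a0 := rfl
  have hf1 : f 1 = a1 := rfl
  have hf2 : f 2 = a2 := rfl
  have hf3 : f 3 = a3 := rfl
  have hf4 : f 4 = a4 := rfl
  have hfi : Function.Injective f := by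
    intro p q h
    rcases zmod5_cases p with rfl|rfl|rfl|rfl|rfl <;>
      rcases zmod5_cases q with rfl|rfl|rfl|rfl|rfl <;>
      simp only [hf0, hf1, hf2, hf3, hf4] at h <;>
      first | rfl | (exfalso; simp_all)
  refine ⟨⟨f, hfi⟩, ?_⟩
  · intro p q
    rcases zmod5_cases p with rfl|rfl|rfl|rfl|rfl <;>
      rcases zmod5_cases q with rfl|rfl|rfl|rfl|rfl <;>
      simp only [Function.Embedding.coeFn_mk, hf0, hf1, hf2, hf3, hf4] <;>
      (constructor <;> intro h2 <;>
        first
          | assumption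
          | decide
          | exact absurd h2 (G.loopless.irrefl _)
          | exact absurd h2 (by assumption)
          | exact absurd h2 (by decide))

lemma p6_helper {V : Type*} {G : SimpleGraph V} (a0 a1 a2 a3 a4 a5 : V)
    (h01 : G.Adj a0 a1) (h12 : G.Adj a1 a2) (h23 : G.Adj a2 a3)
    (h34 : G.Adj a3 a4) (h45 : G.Adj a4 a5)
    (n02 : ¬ G.Adj a0 a2) (n03 : ¬ G.Adj a0 a3) (n04 : ¬ G.Adj a0 a4)
    (n05 : ¬ G.Adj a0 a5) (n13 : ¬ G.Adj a1 a3) (n14 : ¬ G.Adj a1 a4)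
    (n15 : ¬ G.Adj a1 a5) (n24 : ¬ G.Adj a2 a4) (n25 : ¬ G.Adj a2 a5)
    (n35 : ¬ G.Adj a3 a5)
    (e02 : a0 ≠ a2) (e03 : a0 ≠ a3) (e04 : a0 ≠ a4) (e05 : a0 ≠ a5)
    (e13 : a1 ≠ a3) (e14 : a1 ≠ a4) (e15 : a1 ≠ a5)
    (e24 : a2 ≠ a4) (e25 : a2 ≠ a5) (e35 : a3 ≠ a5) :
    HasInducedCopy G (pathGraph 6) := by
  have n20 : ¬ G.Adj a2 a0 := fun h => n02 h.symm
  have n30 : ¬ G.Adj a3 a0 := fun h => n03 h.symm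
  have n40 : ¬ G.Adj a4 a0 := fun h => n04 h.symm
  have n50 : ¬ G.Adj a5 a0 := fun h => n05 h.symm
  have n31 : ¬ G.Adj a3 a1 := fun h => n13 h.symm
  have n41 : ¬ G.Adj a4 a1 := fun h => n14 h.symm
  have n51 : ¬ G.Adj a5 a1 := fun h => n15 h.symm
  have n42 : ¬ G.Adj a4 a2 := fun h => n24 h.symm
  have n52 : ¬ G.Adj a5 a2 := fun h => n25 h.symm
  have n53 : ¬ G.Adj a5 a3 := fun h => n35 h.symm
  have h10 := h01.symm; have h21 := h12.symm; have h32 := h23.symm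
  have h43 := h34.symm; have h54 := h45.symm
  set f : Fin 6 → V := ![a0, a1, a2, a3, a4, a5] with hfdef
  have hf0 : f 0 = a0 := rfl
  have hf1 : f 1 = a1 := rfl
  have hf2 : f 2 = a2 := rfl
  have hf3 : f 3 = a3 := rfl
  have hf4 : f 4 = a4 := rfl
  have hf5 : f 5 = a5 := rfl
  have hfi : Function.Injective f := by
    intro p q h
    rcases fin6_cases p with rfl|rfl|rfl|rfl|rfl|rfl <;>
      rcases fin6_cases q with rfl|rfl|rfl|rfl|rfl|rfl <;>
      simp only [hf0, hf1, hf2, hf3, hf4, hf5] at h <;>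
      first | rfl | (exfalso; simp_all)
  refine ⟨⟨f, hfi⟩, ?_⟩
  · intro p q
    rcases fin6_cases p with rfl|rfl|rfl|rfl|rfl|rfl <;>
      rcases fin6_cases q with rfl|rfl|rfl|rfl|rfl|rfl <;>
      simp only [Function.Embedding.coeFn_mk, hf0, hf1, hf2, hf3, hf4, hf5] <;>
      (constructor <;> intro h2 <;>
        first
          | assumption
          | decide
          | exact absurd h2 (G.loopless.irrefl _)
          | exact absurd h2 (by assumption)
          | exact absurd h2 (by decide))

lemma pattern_ne_v {V : Type*} {G : SimpleGraph V} {v : ZMod 6 → V}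
    (hC : ∀ i j, G.Adj (v i) (v j) ↔ (cyc 6).Adj i j) {x : V} {i : ZMod 6}
    (hx : ∀ j, G.Adj x (v j) ↔ (j = i - 1 ∨ j = i ∨ j = i + 1)) :
    ∀ k, x ≠ v k := by
  intro k hxk
  have h1 : G.Adj x (v (k + 1)) := by
    rw [hxk]
    exact (hC k (k + 1)).2 ((by decide : ∀ k : ZMod 6, (cyc 6).Adj k (k + 1)) k)
  have h2 : G.Adj x (v (k - 1)) := by
    rw [hxk]
    exact (hC k (k - 1)).2 ((by decide : ∀ k : ZMod 6, (cyc 6).Adj k (k - 1)) k)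
  have h3 : ¬ G.Adj x (v k) := by rw [hxk]; exact G.loopless.irrefl _
  exact (by decide : ∀ i k : ZMod 6,
      (k + 1 = i - 1 ∨ k + 1 = i ∨ k + 1 = i + 1) →
      (k - 1 = i - 1 ∨ k - 1 = i ∨ k - 1 = i + 1) →
      ¬ (k = i - 1 ∨ k = i ∨ k = i + 1) → False) i k
    ((hx (k + 1)).1 h1) ((hx (k - 1)).1 h2) (fun h => h3 ((hx k).2 h))


theorem stmt_7 {V : Type*} [Fintype V] (G : SimpleGraph V) (hconn : G.Connected)
    (hP6 : ¬ HasInducedCopy G (pathGraph 6))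
    (hC5 : ¬ HasInducedCopy G (cyc 5))
    (hClaw : ¬ HasInducedCopy G (completeBipartiteGraph (Fin 1) (Fin 3)))
    (v : ZMod 6 → V) (hinj : Function.Injective v)
    (hC : ∀ i j, G.Adj (v i) (v j) ↔ (cyc 6).Adj i j)
    (A : ZMod 6 → Set V)
    (hA : ∀ i, A i =
      insert (v i) {x | ∀ j, G.Adj x (v j) ↔ (j = i - 1 ∨ j = i ∨ j = i + 1)}) :
    ∀ i : ZMod 6,
      (∀ x ∈ A i, ∀ y ∈ A i, x ≠ y → G.Adj x y) ∧
      (∀ x ∈ A i, ∀ y ∈ A (i + 1), G.Adj x y) ∧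
      (∀ x ∈ A i, ∀ y ∈ A (i + 2), ¬ G.Adj x y) ∧
      (∀ x ∈ A i, ∀ y ∈ A (i + 3), ¬ G.Adj x y) := by
  intro i
  refine ⟨?_, ?_, ?_, ?_⟩
  · -- A i is a clique
    intro x hx y hy hxy
    rw [hA i, Set.mem_insert_iff, Set.mem_setOf_eq] at hx hy
    rcases hx with rfl | hx <;> rcases hy with rfl | hy
    · exact absurd rfl hxy
    · exact ((hy i).2 (Or.inr (Or.inl rfl))).symm
    · exact (hx i).2 (Or.inr (Or.inl rfl))
    · by_contra hn
      refine hClaw (claw_helper (v (i - 1)) x y (v (i - 2)) ?_ ?_ ?_ hn ?_ ?_ hxy ?_ ?_)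
      · exact ((hx (i - 1)).2 (Or.inl rfl)).symm
      · exact ((hy (i - 1)).2 (Or.inl rfl)).symm
      · exact (hC _ _).2 ((by decide : ∀ i : ZMod 6, (cyc 6).Adj (i - 1) (i - 2)) i)
      · exact fun h => (by decide : ∀ i : ZMod 6,
          ¬ (i - 2 = i - 1 ∨ i - 2 = i ∨ i - 2 = i + 1)) i ((hx (i - 2)).1 h)
      · exact fun h => (by decide : ∀ i : ZMod 6,
          ¬ (i - 2 = i - 1 ∨ i - 2 = i ∨ i - 2 = i + 1)) i ((hy (i - 2)).1 h)
      · exact pattern_ne_v hC hx (i - 2)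
      · exact pattern_ne_v hC hy (i - 2)
  · -- [A i, A (i+1)] is complete
    intro x hx y hy
    rw [hA i, Set.mem_insert_iff, Set.mem_setOf_eq] at hx
    rw [hA (i + 1), Set.mem_insert_iff, Set.mem_setOf_eq] at hy
    rcases hx with rfl | hx <;> rcases hy with rfl | hy
    · exact (hC i (i + 1)).2 ((by decide : ∀ i : ZMod 6, (cyc 6).Adj i (i + 1)) i)
    · exact ((hy i).2 (Or.inl (by ring))).symm
    · exact (hx (i + 1)).2 (Or.inr (Or.inr rfl))
    · by_contra hn
      have hyx : ¬ G.Adj y x := fun h => hn h.symm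
      refine hP6 (p6_helper y (v (i + 2)) (v (i + 3)) (v (i + 4)) (v (i + 5)) x
        ?_ ?_ ?_ ?_ ?_ ?_ ?_ ?_ hyx ?_ ?_ ?_ ?_ ?_ ?_ ?_ ?_ ?_ ?_ ?_ ?_ ?_ ?_ ?_ ?_)
      · exact (hy (i + 2)).2 (Or.inr (Or.inr (by ring)))
      · exact (hC _ _).2 ((by decide : ∀ i : ZMod 6, (cyc 6).Adj (i + 2) (i + 3)) i)
      · exact (hC _ _).2 ((by decide : ∀ i : ZMod 6, (cyc 6).Adj (i + 3) (i + 4)) i)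
      · exact (hC _ _).2 ((by decide : ∀ i : ZMod 6, (cyc 6).Adj (i + 4) (i + 5)) i)
      · exact ((hx (i + 5)).2 (Or.inl ((by decide : ∀ i : ZMod 6, i + 5 = i - 1) i))).symm
      · exact fun h => (by decide : ∀ i : ZMod 6,
          ¬ (i + 3 = i + 1 - 1 ∨ i + 3 = i + 1 ∨ i + 3 = i + 1 + 1)) i ((hy (i + 3)).1 h)
      · exact fun h => (by decide : ∀ i : ZMod 6,
          ¬ (i + 4 = i + 1 - 1 ∨ i + 4 = i + 1 ∨ i + 4 = i + 1 + 1)) i ((hy (i + 4)).1 h)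
      · exact fun h => (by decide : ∀ i : ZMod 6,
          ¬ (i + 5 = i + 1 - 1 ∨ i + 5 = i + 1 ∨ i + 5 = i + 1 + 1)) i ((hy (i + 5)).1 h)
      · exact fun h => (by decide : ∀ i : ZMod 6,
          ¬ (cyc 6).Adj (i + 2) (i + 4)) i ((hC _ _).1 h)
      · exact fun h => (by decide : ∀ i : ZMod 6,
          ¬ (cyc 6).Adj (i + 2) (i + 5)) i ((hC _ _).1 h)
      · exact fun h => (by decide : ∀ i : ZMod 6,
          ¬ (i + 2 = i - 1 ∨ i + 2 = i ∨ i + 2 = i + 1)) i ((hx (i + 2)).1 h.symm)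
      · exact fun h => (by decide : ∀ i : ZMod 6,
          ¬ (cyc 6).Adj (i + 3) (i + 5)) i ((hC _ _).1 h)
      · exact fun h => (by decide : ∀ i : ZMod 6,
          ¬ (i + 3 = i - 1 ∨ i + 3 = i ∨ i + 3 = i + 1)) i ((hx (i + 3)).1 h.symm)
      · exact fun h => (by decide : ∀ i : ZMod 6,
          ¬ (i + 4 = i - 1 ∨ i + 4 = i ∨ i + 4 = i + 1)) i ((hx (i + 4)).1 h.symm)
      · exact pattern_ne_v hC hy (i + 3)
      · exact pattern_ne_v hC hy (i + 4)
      · exact pattern_ne_v hC hy (i + 5)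
      · exact fun h => (by decide : ∀ i : ZMod 6,
          ¬ (i - 1 = i + 1 - 1 ∨ i - 1 = i + 1 ∨ i - 1 = i + 1 + 1)) i
          ((hy (i - 1)).1 (by rw [h]; exact (hx (i - 1)).2 (Or.inl rfl)))
      · exact fun h => (by decide : ∀ i : ZMod 6, i + 2 ≠ i + 4) i (hinj h)
      · exact fun h => (by decide : ∀ i : ZMod 6, i + 2 ≠ i + 5) i (hinj h)
      · exact (pattern_ne_v hC hx (i + 2)).symm
      · exact fun h => (by decide : ∀ i : ZMod 6, i + 3 ≠ i + 5) i (hinj h)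
      · exact (pattern_ne_v hC hx (i + 3)).symm
      · exact (pattern_ne_v hC hx (i + 4)).symm
  · -- [A i, A (i+2)] is empty
    intro x hx y hy hadj
    rw [hA i, Set.mem_insert_iff, Set.mem_setOf_eq] at hx
    rw [hA (i + 2), Set.mem_insert_iff, Set.mem_setOf_eq] at hy
    rcases hx with rfl | hx <;> rcases hy with rfl | hy
    · exact (by decide : ∀ i : ZMod 6, ¬ (cyc 6).Adj i (i + 2)) i ((hC _ _).1 hadj)
    · exact (by decide : ∀ i : ZMod 6,
        ¬ (i = i + 2 - 1 ∨ i = i + 2 ∨ i = i + 2 + 1)) i ((hy i).1 hadj.symm)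
    · exact (by decide : ∀ i : ZMod 6,
        ¬ (i + 2 = i - 1 ∨ i + 2 = i ∨ i + 2 = i + 1)) i ((hx (i + 2)).1 hadj)
    · refine hC5 (c5_helper x y (v (i + 3)) (v (i + 4)) (v (i + 5))
        hadj ?_ ?_ ?_ ?_ ?_ ?_ ?_ ?_ ?_ ?_ ?_ ?_ ?_ ?_)
      · exact (hy (i + 3)).2 (Or.inr (Or.inr (by ring)))
      · exact (hC _ _).2 ((by decide : ∀ i : ZMod 6, (cyc 6).Adj (i + 3) (i + 4)) i)
      · exact (hC _ _).2 ((by decide : ∀ i : ZMod 6, (cyc 6).Adj (i + 4) (i + 5)) i)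
      · exact ((hx (i + 5)).2 (Or.inl ((by decide : ∀ i : ZMod 6, i + 5 = i - 1) i))).symm
      · exact fun h => (by decide : ∀ i : ZMod 6,
          ¬ (i + 3 = i - 1 ∨ i + 3 = i ∨ i + 3 = i + 1)) i ((hx (i + 3)).1 h)
      · exact fun h => (by decide : ∀ i : ZMod 6,
          ¬ (i + 4 = i - 1 ∨ i + 4 = i ∨ i + 4 = i + 1)) i ((hx (i + 4)).1 h)
      · exact fun h => (by decide : ∀ i : ZMod 6,
          ¬ (i + 4 = i + 2 - 1 ∨ i + 4 = i + 2 ∨ i + 4 = i + 2 + 1)) i ((hy (i + 4)).1 h)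
      · exact fun h => (by decide : ∀ i : ZMod 6,
          ¬ (i + 5 = i + 2 - 1 ∨ i + 5 = i + 2 ∨ i + 5 = i + 2 + 1)) i ((hy (i + 5)).1 h)
      · exact fun h => (by decide : ∀ i : ZMod 6,
          ¬ (cyc 6).Adj (i + 3) (i + 5)) i ((hC _ _).1 h)
      · exact pattern_ne_v hC hx (i + 3)
      · exact pattern_ne_v hC hx (i + 4)
      · exact pattern_ne_v hC hy (i + 4)
      · exact pattern_ne_v hC hy (i + 5)
      · exact fun h => (by decide : ∀ i : ZMod 6, i + 3 ≠ i + 5) i (hinj h)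
  · -- [A i, A (i+3)] is empty
    intro x hx y hy hadj
    rw [hA i, Set.mem_insert_iff, Set.mem_setOf_eq] at hx
    rw [hA (i + 3), Set.mem_insert_iff, Set.mem_setOf_eq] at hy
    rcases hx with rfl | hx <;> rcases hy with rfl | hy
    · exact (by decide : ∀ i : ZMod 6, ¬ (cyc 6).Adj i (i + 3)) i ((hC _ _).1 hadj)
    · exact (by decide : ∀ i : ZMod 6,
        ¬ (i = i + 3 - 1 ∨ i = i + 3 ∨ i = i + 3 + 1)) i ((hy i).1 hadj.symm)
    · exact (by decide : ∀ i : ZMod 6,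
        ¬ (i + 3 = i - 1 ∨ i + 3 = i ∨ i + 3 = i + 1)) i ((hx (i + 3)).1 hadj)
    · refine hClaw (claw_helper x y (v (i - 1)) (v (i + 1))
        hadj ?_ ?_ ?_ ?_ ?_ ?_ ?_ ?_)
      · exact (hx (i - 1)).2 (Or.inl rfl)
      · exact (hx (i + 1)).2 (Or.inr (Or.inr rfl))
      · exact fun h => (by decide : ∀ i : ZMod 6,
          ¬ (i - 1 = i + 3 - 1 ∨ i - 1 = i + 3 ∨ i - 1 = i + 3 + 1)) i ((hy (i - 1)).1 h)
      · exact fun h => (by decide : ∀ i : ZMod 6,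
          ¬ (i + 1 = i + 3 - 1 ∨ i + 1 = i + 3 ∨ i + 1 = i + 3 + 1)) i ((hy (i + 1)).1 h)
      · exact fun h => (by decide : ∀ i : ZMod 6,
          ¬ (cyc 6).Adj (i - 1) (i + 1)) i ((hC _ _).1 h)
      · exact pattern_ne_v hC hy (i - 1)
      · exact pattern_ne_v hC hy (i + 1)
      · exact fun h => (by decide : ∀ i : ZMod 6, i - 1 ≠ i + 1) i (hinj h)
end

section
/- Let G be a connected {P6, C5, K_{1,3}}-free graph containing an induced 6-cycle with vertex set N0. Then every vertex of G is at distance at most 1 from N0. -/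
open SimpleGraph Finset

lemma cyc_adj' {n : ℕ} (a b : ZMod n) :
    (cyc n).Adj a b ↔ (a ≠ b ∧ (a = b + 1 ∨ b = a + 1)) := Iff.rfl

lemma cyc6_shift (j a b : ZMod 6) : (cyc 6).Adj (j+a) (j+b) ↔ (cyc 6).Adj a b := by
  rw [cyc_adj', cyc_adj']
  simp [add_assoc, add_right_inj, ne_eq]

section Main
variable {V : Type*} {G : SimpleGraph V} {v : ZMod 6 → V}

/-- Claw-freeness: two non-cycle-adjacent cycle neighbours of `y` plus `x` give a claw. -/
lemma no_two_lem (hClaw : ¬ HasInducedCopy G (completeBipartiteGraph (Fin 1) (Fin 3)))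
    (hinj : Function.Injective v)
    (hC : ∀ i j, G.Adj (v i) (v j) ↔ (cyc 6).Adj i j)
    {x y : V} (hx : ∀ k, ¬ G.Adj x (v k)) (hxv : ∀ k, x ≠ v k)
    (hyx : G.Adj y x) {a b : ZMod 6}
    (ha : G.Adj y (v a)) (hb : G.Adj y (v b))
    (hab : ¬ (cyc 6).Adj a b) (hne : a ≠ b) : False := by
  apply hClaw
  set f : (Fin 1 ⊕ Fin 3) → V := Sum.elim (fun _ => y) ![x, v a, v b] with hf
  have hyne : y ≠ x := hyx.ne
  have hyna : y ≠ v a := ha.ne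
  have hynb : y ≠ v b := hb.ne
  have hvab : v a ≠ v b := fun h => hne (hinj h)
  have hfinj : Function.Injective f := by
    intro w w'
    rcases w with w | w <;> rcases w' with w' | w' <;>
      fin_cases w <;> fin_cases w' <;>
      simp_all [hf, hxv a, hxv b, (hxv a).symm, (hxv b).symm, hvab.symm] <;> tauto
  refine ⟨⟨f, hfinj⟩, ?_⟩
  intro p q
  have hnab : ¬ G.Adj (v a) (v b) := fun h => hab ((hC a b).mp h)
  have hnab' : ¬ G.Adj (v b) (v a) := fun h => hnab h.symm
  have hxa : ¬ G.Adj (v a) x := fun h => hx a h.symm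
  have hxb : ¬ G.Adj (v b) x := fun h => hx b h.symm
  rcases p with p | p <;> rcases q with q | q <;>
    fin_cases p <;> fin_cases q <;>
    simp [hf, hyx, ha, hb, hyx.symm, ha.symm, hb.symm, hx a, hx b,
      hxa, hxb, hnab, hnab']

/-- The induced `P₆` contradiction. -/
lemma no_p6_lem (hP6 : ¬ HasInducedCopy G (pathGraph 6))
    (hinj : Function.Injective v)
    (hC : ∀ i j, G.Adj (v i) (v j) ↔ (cyc 6).Adj i j)
    {x y : V} (hx : ∀ k, ¬ G.Adj x (v k)) (hxv : ∀ k, x ≠ v k)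
    (hyx : G.Adj y x) (j : ZMod 6)
    (h0 : G.Adj y (v (j+0))) (h1 : ¬ G.Adj y (v (j+1)))
    (h2 : ¬ G.Adj y (v (j+2))) (h3 : ¬ G.Adj y (v (j+3))) : False := by
  apply hP6
  have hy : ∀ k, y ≠ v k := by
    intro k hk
    exact hx k (hk ▸ hyx).symm
  have vadj : ∀ a b : ZMod 6, G.Adj (v (j+a)) (v (j+b)) ↔ (cyc 6).Adj a b :=
    fun a b => (hC _ _).trans (cyc6_shift j a b)
  have vinj : ∀ a b : ZMod 6, a ≠ b → v (j+a) ≠ v (j+b) := by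
    intro a b h hv
    exact h (add_left_cancel (hinj hv))
  have d01 : v (j+0) ≠ v (j+1) := vinj 0 1 (by decide)
  have d02 : v (j+0) ≠ v (j+2) := vinj 0 2 (by decide)
  have d03 : v (j+0) ≠ v (j+3) := vinj 0 3 (by decide)
  have d12 : v (j+1) ≠ v (j+2) := vinj 1 2 (by decide)
  have d13 : v (j+1) ≠ v (j+3) := vinj 1 3 (by decide)
  have d23 : v (j+2) ≠ v (j+3) := vinj 2 3 (by decide)
  have hxy : x ≠ y := hyx.ne'
  have e01 : G.Adj (v (j+0)) (v (j+1)) := (vadj 0 1).mpr (by rw [cyc_adj']; decide)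
  have e12 : G.Adj (v (j+1)) (v (j+2)) := (vadj 1 2).mpr (by rw [cyc_adj']; decide)
  have e23 : G.Adj (v (j+2)) (v (j+3)) := (vadj 2 3).mpr (by rw [cyc_adj']; decide)
  have n02 : ¬ G.Adj (v (j+0)) (v (j+2)) :=
    fun h => absurd ((vadj 0 2).mp h) (by rw [cyc_adj']; decide)
  have n03 : ¬ G.Adj (v (j+0)) (v (j+3)) :=
    fun h => absurd ((vadj 0 3).mp h) (by rw [cyc_adj']; decide)
  have n13 : ¬ G.Adj (v (j+1)) (v (j+3)) :=
    fun h => absurd ((vadj 1 3).mp h) (by rw [cyc_adj']; decide)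
  have hx' : ∀ k, ¬ G.Adj (v k) x := fun k h => hx k h.symm
  have h1' : ¬ G.Adj (v (j+1)) y := fun h => h1 h.symm
  have h2' : ¬ G.Adj (v (j+2)) y := fun h => h2 h.symm
  have h3' : ¬ G.Adj (v (j+3)) y := fun h => h3 h.symm
  refine ⟨⟨fun p => if p = 0 then x else if p = 1 then y else if p = 2 then v (j+0)
    else if p = 3 then v (j+1) else if p = 4 then v (j+2) else v (j+3), ?_⟩, ?_⟩
  · intro p q hpq
    fin_cases p <;> fin_cases q <;>
      first
      | rfl
      | exact absurd hpq (by
          first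
          | exact hxy | exact hxy.symm | exact hxv _ | exact fun h => hxv _ h.symm
          | exact hy _ | exact fun h => hy _ h.symm
          | exact d01 | exact d02 | exact d03 | exact d12 | exact d13 | exact d23
          | exact d01.symm | exact d02.symm | exact d03.symm
          | exact d12.symm | exact d13.symm | exact d23.symm)
  · intro p q
    fin_cases p <;> fin_cases q <;>
      first
      | exact iff_of_true (by
          first
          | exact hyx | exact hyx.symm | exact h0 | exact h0.symm
          | exact e01 | exact e01.symm | exact e12 | exact e12.symm
          | exact e23 | exact e23.symm)
          (by rw [pathGraph_adj]; decide)
      | exact iff_of_false (by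
          first
          | exact G.irrefl | exact hx _ | exact hx' _
          | exact h1 | exact h1' | exact h2 | exact h2' | exact h3 | exact h3'
          | exact n02 | exact fun h => n02 h.symm
          | exact n03 | exact fun h => n03 h.symm
          | exact n13 | exact fun h => n13 h.symm)
          (by rw [pathGraph_adj]; decide)
end Main

theorem stmt_8 {V : Type*} [Fintype V] (G : SimpleGraph V) (hconn : G.Connected)
    (hP6 : ¬ HasInducedCopy G (pathGraph 6))
    (hC5 : ¬ HasInducedCopy G (cyc 5))
    (hClaw : ¬ HasInducedCopy G (completeBipartiteGraph (Fin 1) (Fin 3)))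
    (v : ZMod 6 → V) (hinj : Function.Injective v)
    (hC : ∀ i j, G.Adj (v i) (v j) ↔ (cyc 6).Adj i j) :
    ∀ x : V, ∃ i : ZMod 6, G.dist x (v i) ≤ 1 := by
  -- the step lemma
  have step : ∀ y x : V, G.Adj y x →
      ((∃ i, y = v i) ∨ (∃ i, G.Adj y (v i))) →
      ((∃ i, x = v i) ∨ (∃ i, G.Adj x (v i))) := by
    intro y x hyx hy
    by_contra hcon
    push_neg at hcon
    obtain ⟨hxv, hx⟩ := hcon
    rcases hy with ⟨i, rfl⟩ | ⟨i, hyi⟩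
    · exact hx i hyx.symm
    -- claw-freeness: neighbours of y on the cycle are pairwise cycle-adjacent
    have key : ∀ a b : ZMod 6, G.Adj y (v a) → G.Adj y (v b) → a ≠ b → (cyc 6).Adj a b := by
      intro a b ha hb hne
      by_contra hab
      exact no_two_lem hClaw hinj hC hx hxv hyx ha hb hab hne
    -- produce j with y ~ v j and y not adjacent to v(j+1), v(j+2), v(j+3)
    have nocyc : ∀ a b : ZMod 6, ¬ (cyc 6).Adj a b → a ≠ b → G.Adj y (v a) → ¬ G.Adj y (v b) :=
      fun a b h hne ha hb => h (key a b ha hb hne)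
    have shift : ∀ (c : ZMod 6) {a b : ZMod 6}, ¬ (cyc 6).Adj a b → a ≠ b →
        G.Adj y (v (c+a)) → ¬ G.Adj y (v (c+b)) := by
      intro c a b h hne ha
      refine nocyc (c+a) (c+b) (fun hh => h ((cyc6_shift c a b).mp hh)) ?_ ha
      intro he; exact hne (add_left_cancel he)
    by_cases h1 : G.Adj y (v (i+1))
    · -- use j = i + 1
      have hyi' : G.Adj y (v (i+0)) := by rwa [add_zero]
      refine no_p6_lem hP6 hinj hC hx hxv hyx (i+1) (by rwa [add_zero]) ?_ ?_ ?_
      · have := shift i (a := 0) (b := 2) (by rw [cyc_adj']; decide) (by decide) hyi'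
        rwa [show i+1+1 = i+2 by ring]
      · have := shift i (a := 0) (b := 3) (by rw [cyc_adj']; decide) (by decide) hyi'
        rwa [show i+1+2 = i+3 by ring]
      · have := shift i (a := 1) (b := 4) (by rw [cyc_adj']; decide) (by decide) h1
        rwa [show i+1+3 = i+4 by ring]
    · -- use j = i
      have hyi' : G.Adj y (v (i+0)) := by rwa [add_zero]
      refine no_p6_lem hP6 hinj hC hx hxv hyx i hyi' h1 ?_ ?_
      · exact shift i (a := 0) (b := 2) (by rw [cyc_adj']; decide) (by decide) hyi'
      · exact shift i (a := 0) (b := 3) (by rw [cyc_adj']; decide) (by decide) hyi'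
  -- propagate along walks
  have main : ∀ {u w : V} (p : G.Walk u w),
      ((∃ i, u = v i) ∨ (∃ i, G.Adj u (v i))) →
      ((∃ i, w = v i) ∨ (∃ i, G.Adj w (v i))) := by
    intro u w p
    induction p with
    | nil => exact id
    | cons h p ih => exact fun hu => ih (step _ _ h hu)
  intro x
  obtain ⟨p⟩ := hconn.preconnected (v 0) x
  rcases main p (Or.inl ⟨0, rfl⟩) with ⟨i, rfl⟩ | ⟨i, hi⟩
  · exact ⟨i, by rw [SimpleGraph.dist_self]; exact Nat.zero_le 1⟩
  · exact ⟨i, le_trans (G.dist_le hi.toWalk) (le_of_eq rfl)⟩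
end

section
/- Let G be a connected {P5, K4, Kite, Bull}-free graph containing an induced 5-cycle with vertex set N0, and let N_i denote the set of vertices at distance i from N0. Then N_i = ∅ for all i >= 4. -/
open SimpleGraph Finset

lemma aux_dist_getVert_le {V : Type*} {G : SimpleGraph V} (hconn : G.Connected) :
    ∀ {u v : V} (p : G.Walk u v) (i : ℕ), G.dist u (p.getVert i) ≤ i := by
  intro u v p
  induction p with
  | nil => intro i; simp [SimpleGraph.Walk.getVert, SimpleGraph.dist_self]
  | cons h q ih =>
    intro i
    cases i with
    | zero => simp [SimpleGraph.dist_self]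
    | succ j =>
      rw [SimpleGraph.Walk.getVert_cons_succ]
      calc G.dist _ _ ≤ G.dist _ _ + G.dist _ _ := hconn.dist_triangle
        _ ≤ 1 + j := by
          gcongr
          · exact le_trans (SimpleGraph.dist_le h.toWalk) (by simp)
          · exact ih j
        _ = j + 1 := by omega

lemma aux_dist_getVert_right {V : Type*} {G : SimpleGraph V} :
    ∀ {u v : V} (p : G.Walk u v) (i : ℕ), G.dist (p.getVert i) v ≤ p.length - i := by
  intro u v p
  induction p with
  | nil => intro i; simp [SimpleGraph.Walk.getVert, SimpleGraph.dist_self]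
  | cons h q ih =>
    intro i
    cases i with
    | zero => simpa using SimpleGraph.dist_le (SimpleGraph.Walk.cons h q)
    | succ j =>
      rw [SimpleGraph.Walk.getVert_cons_succ]
      simpa using ih j

lemma aux_dist_le_three {V : Type*} (G : SimpleGraph V) (hconn : G.Connected)
    (hP5 : ¬ HasInducedCopy G (pathGraph 5)) (x y : V) : G.dist x y ≤ 3 := by
  by_contra h
  push_neg at h
  obtain ⟨p, hp⟩ := hconn.exists_walk_length_eq_dist x y
  have hlen : 4 ≤ p.length := by omega
  have key : ∀ i j : ℕ, i ≤ j → j ≤ p.length → j - i ≤ G.dist (p.getVert i) (p.getVert j) := by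
    intro i j hij hj
    have h1 : G.dist x y ≤ G.dist x (p.getVert i) + G.dist (p.getVert i) (p.getVert j)
        + G.dist (p.getVert j) y := by
      calc G.dist x y ≤ G.dist x (p.getVert i) + G.dist (p.getVert i) y := hconn.dist_triangle
        _ ≤ _ := by
            have := hconn.dist_triangle (u := p.getVert i) (v := p.getVert j) (w := y)
            omega
    have h2 := aux_dist_getVert_le hconn p i
    have h3 := aux_dist_getVert_right p j
    omega
  apply hP5
  have hinj : Function.Injective (fun k : Fin 5 => p.getVert k.val) := by
    intro a b hab
    have hab' : p.getVert a.val = p.getVert b.val := hab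
    by_contra hne
    have hne' : a.val ≠ b.val := fun e => hne (Fin.ext e)
    rcases Nat.lt_or_ge a.val b.val with hlt | hge
    · have := key a.val b.val hlt.le (by omega)
      rw [hab'] at this
      simp [SimpleGraph.dist_self] at this; omega
    · have hlt : b.val < a.val := by omega
      have := key b.val a.val hlt.le (by omega)
      rw [hab'] at this
      simp [SimpleGraph.dist_self] at this; omega
  refine ⟨⟨fun k : Fin 5 => p.getVert k.val, hinj⟩, ?_⟩
  intro a b
  simp only [Function.Embedding.coeFn_mk, SimpleGraph.pathGraph_adj]
  constructor
  · intro hadj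
    have hd1 : G.dist (p.getVert a.val) (p.getVert b.val) = 1 :=
      SimpleGraph.dist_eq_one_iff_adj.mpr hadj
    have hne' : a.val ≠ b.val := fun e => hadj.ne (by rw [e])
    rcases Nat.lt_or_ge a.val b.val with hlt | hge
    · have := key a.val b.val hlt.le (by omega)
      omega
    · have hlt : b.val < a.val := by omega
      have := key b.val a.val hlt.le (by omega)
      rw [SimpleGraph.dist_comm] at hd1
      omega
  · rintro (hab | hba)
    · have := p.adj_getVert_succ (i := a.val) (by omega)
      rwa [hab] at this
    · have := p.adj_getVert_succ (i := b.val) (by omega)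
      rw [hba] at this
      exact this.symm

theorem stmt_17 {V : Type*} [Fintype V] (G : SimpleGraph V) (hconn : G.Connected)
    (hP5 : ¬ HasInducedCopy G (pathGraph 5))
    (hK4 : ¬ HasInducedCopy G (⊤ : SimpleGraph (Fin 4)))
    (hKite : ¬ HasInducedCopy G kite)
    (hBull : ¬ HasInducedCopy G bull)
    (v : ZMod 5 → V) (hinj : Function.Injective v)
    (hC : ∀ i j, G.Adj (v i) (v j) ↔ (cyc 5).Adj i j) :
    ∀ i : ℕ, 4 ≤ i → {x | distToSet G (Set.range v) x = i} = ∅ := by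

  intro i hi
  ext x
  simp only [Set.mem_setOf_eq, Set.mem_empty_iff_false, iff_false]
  intro hx
  have hmem : G.dist x (v 0) ∈ (fun y => G.dist x y) '' Set.range v :=
    ⟨v 0, ⟨0, rfl⟩, rfl⟩
  have hle : distToSet G (Set.range v) x ≤ G.dist x (v 0) := Nat.sInf_le hmem
  have := aux_dist_le_three G hconn hP5 x (v 0)
  omega
end

section
/- Let G be a connected {P5, (P2 ∪ P3)-complement, P5-complement, Dart}-free graph that contains an induced 5-cycle C on vertices v0,...,v4, and suppose G = C5(S1,...,S5) + H for some nonempty induced subgraph H (i.e., every vertex of H is adjacent to every vertex outside H). Then H induces a complete graph. -/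
open SimpleGraph Finset

/-- Complement of the disjoint union of P2 and P3. -/
def p2p3Compl : SimpleGraph (Fin 5) :=
  (SimpleGraph.fromEdgeSet {s(0,1), s(2,3), s(3,4)})ᶜ

/-- Dart: diamond (K4 minus an edge) plus a pendant vertex adjacent to a degree-3 vertex. -/
def dart : SimpleGraph (Fin 5) :=
  SimpleGraph.fromEdgeSet {s(0,1), s(0,2), s(1,2), s(1,3), s(2,3), s(1,4)}

theorem stmt_18 {V : Type*} [Fintype V] (G : SimpleGraph V) (hconn : G.Connected)
    (hP5 : ¬ HasInducedCopy G (pathGraph 5))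
    (hP2P3c : ¬ HasInducedCopy G p2p3Compl)
    (hP5c : ¬ HasInducedCopy G (pathGraph 5)ᶜ)
    (hDart : ¬ HasInducedCopy G dart)
    (v : ZMod 5 → V) (hinj : Function.Injective v)
    (hC : ∀ i j, G.Adj (v i) (v j) ↔ (cyc 5).Adj i j)
    (H : Set V) (hHne : H.Nonempty)
    (hjoin : ∀ x ∈ H, ∀ y, y ∉ H → G.Adj x y)
    (hvH : ∀ i, v i ∉ H) :
    ∀ x ∈ H, ∀ y ∈ H, x ≠ y → G.Adj x y := by
  intro x hx y hy hxy
  by_contra hadj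
  apply hP2P3c
  have hxv : ∀ i, G.Adj x (v i) := fun i => hjoin x hx _ (hvH i)
  have hyv : ∀ i, G.Adj y (v i) := fun i => hjoin y hy _ (hvH i)
  have hxne : ∀ i, x ≠ v i := fun i h => hvH i (h ▸ hx)
  have hyne : ∀ i, y ≠ v i := fun i h => hvH i (h ▸ hy)
  refine ⟨⟨![x, y, v 0, v 3, v 1], ?_⟩, ?_⟩
  · intro a b hab
    fin_cases a <;> fin_cases b <;>
      simp_all [hinj.eq_iff] <;>
      first
        | rfl
        | (exact absurd hab (hxne _))
        | (exact absurd hab (hyne _))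
        | (exact absurd hab.symm (hxne _))
        | (exact absurd hab.symm (hyne _))
        | (exact absurd hab (by decide))
  · have hyx : ¬ G.Adj y x := fun h => hadj h.symm
    intro a b
    change G.Adj (![x, y, v 0, v 3, v 1] a) (![x, y, v 0, v 3, v 1] b) ↔ _
    fin_cases a <;> fin_cases b <;>
      simp [p2p3Compl, cyc, SimpleGraph.fromEdgeSet_adj, Set.mem_insert_iff,
        Sym2.eq, Sym2.rel_iff', Function.Embedding.coeFn_mk, hC, hadj, hyx, hxv, hyv,
        (hxv _).symm, (hyv _).symm, G.irrefl] <;>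
      decide
end
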